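/- arXiv:1102.0958 — 5 statements merged into one kernel-verified Lean document; each statement's English description precedes it below -/
import Mathlib

section
/- Let x̄ ∈ F(0) for the feasible solution map F of the parametric convex inequality system σ(p), with X an arbitrary Banach space. Then F is Lipschitz-like around (0, x̄) if and only if the coderivative condition D*F(0, x̄)(0) = {0} holds, i.e., the only p* ∈ l_∞(T)* satisfying ⟨p*, p⟩ ≤ 0 for all p ∈ dom F is p* = 0 in the sense that p* ∈ D*F(0, x̄)(0) implies p* = 0. -/
open Filter
open scoped ENNReal

noncomputable section

/-- The Banach space `l_∞(T)` of bounded real functions on `T` with sup norm. -/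
abbrev Linf (T : Type*) : Type _ := lp (fun _ : T => ℝ) ∞

/-- The Dirac evaluation functional `δ_t ∈ l_∞(T)*`. -/
def dirac (T : Type*) (t : T) : Linf T →L[ℝ] ℝ :=
  LinearMap.mkContinuous
    { toFun := fun p => p t
      map_add' := fun p q => by simp [lp.coeFn_add]
      map_smul' := fun c p => by simp [lp.coeFn_smul] }
    1 (fun p => by rw [one_mul]; exact lp.norm_apply_le_norm ENNReal.top_ne_zero p t)

variable {X : Type*} [NormedAddCommGroup X] [NormedSpace ℝ X]

/-- Fenchel conjugate of an extended-real-valued function. -/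
def conj (g : X → EReal) (u : X →L[ℝ] ℝ) : EReal :=
  ⨆ x : X, (u x : EReal) - g x

/-- `dom g* = {u* : g*(u*) < +∞}`. -/
def domConj (g : X → EReal) : Set (X →L[ℝ] ℝ) := {u | conj g u < ⊤}

/-- `gph g* = {(u*, g*(u*)) : u* ∈ dom g*}`. -/
def gphConj (g : X → EReal) : Set ((X →L[ℝ] ℝ) × ℝ) :=
  {q | conj g q.1 = (q.2 : EReal)}

/-- `epi g* = {(u*, γ) : g*(u*) ≤ γ}`. -/
def epiConj (g : X → EReal) : Set ((X →L[ℝ] ℝ) × ℝ) :=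
  {q | conj g q.1 ≤ (q.2 : EReal)}

/-- A proper extended-real-valued function: never `⊥`, not identically `⊤`. -/
def ErealProper (g : X → EReal) : Prop := (∀ x, g x ≠ ⊥) ∧ ∃ x, g x ≠ ⊤

/-- Convexity of an extended-real-valued function. -/
def ErealConvexOn (g : X → EReal) : Prop :=
  ∀ x y : X, ∀ a b : ℝ, 0 ≤ a → 0 ≤ b → a + b = 1 →
    g (a • x + b • y) ≤ (a : EReal) * g x + (b : EReal) * g y

variable {T : Type*}

/-- The feasible solution map `F(p) = {x : f_t(x) ≤ p_t ∀ t}`. -/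
def feas (f : T → X → EReal) (p : Linf T) : Set X :=
  {x | ∀ t, f t x ≤ ((p t : ℝ) : EReal)}

/-- The graph of the feasible solution map. -/
def feasGraph (f : T → X → EReal) : Set (Linf T × X) :=
  {q | q.2 ∈ feas f q.1}

/-- Lipschitz-like (Aubin) property of a set-valued map (given by its graph `G`)
around `(z̄, ȳ) ∈ G` with modulus `ℓ`. -/
def LipLike {Z Y : Type*} [NormedAddCommGroup Z] [NormedAddCommGroup Y]
    (G : Set (Z × Y)) (zb : Z) (yb : Y) (ℓ : ℝ) : Prop :=
  ∃ U ∈ nhds zb, ∃ V ∈ nhds yb, ∀ z ∈ U, ∀ u ∈ U, ∀ y ∈ V,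
    (z, y) ∈ G → ∃ y', (u, y') ∈ G ∧ ‖y - y'‖ ≤ ℓ * ‖z - u‖

/-- The exact Lipschitzian bound `lip G(z̄, ȳ)` (value `∞` if the map is not
Lipschitz-like around `(z̄, ȳ)`). -/
def lipBound {Z Y : Type*} [NormedAddCommGroup Z] [NormedAddCommGroup Y]
    (G : Set (Z × Y)) (zb : Z) (yb : Y) : ℝ≥0∞ :=
  sInf {c : ℝ≥0∞ | ∃ ℓ : ℝ, 0 ≤ ℓ ∧ LipLike G zb yb ℓ ∧ c = ENNReal.ofReal ℓ}

/-- Coderivative of a convex-graph map `G` at `(0, ȳ)`: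
`z* ∈ D*G(0, ȳ)(y*)` iff `⟨z*, z⟩ − ⟨y*, y⟩ ≤ −⟨y*, ȳ⟩` for all `(z, y) ∈ G`. -/
def coderivMem {Z Y : Type*} [NormedAddCommGroup Z] [NormedSpace ℝ Z]
    [NormedAddCommGroup Y] [NormedSpace ℝ Y]
    (G : Set (Z × Y)) (yb : Y) (ys : Y →L[ℝ] ℝ) (zs : Z →L[ℝ] ℝ) : Prop :=
  ∀ q ∈ G, zs q.1 - ys q.2 ≤ - ys yb

/-- The coderivative norm `‖D*G(0, ȳ)‖ = sup{‖z*‖ : z* ∈ D*G(0, ȳ)(y*), ‖y*‖ ≤ 1}`. -/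
def coderivNorm {Z Y : Type*} [NormedAddCommGroup Z] [NormedSpace ℝ Z]
    [NormedAddCommGroup Y] [NormedSpace ℝ Y]
    (G : Set (Z × Y)) (yb : Y) : ℝ≥0∞ :=
  ⨆ zs ∈ {zs : Z →L[ℝ] ℝ | ∃ ys : Y →L[ℝ] ℝ, ‖ys‖ ≤ 1 ∧ coderivMem G yb ys zs},
    (‖zs‖₊ : ℝ≥0∞)

/-- Weak* closure of a subset of `X* × ℝ`. -/
def wclosure2 (S : Set ((X →L[ℝ] ℝ) × ℝ)) : Set ((X →L[ℝ] ℝ) × ℝ) :=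
  {q | ((StrongDual.toWeakDual q.1 : WeakDual ℝ X), q.2) ∈
    closure ((fun w : (X →L[ℝ] ℝ) × ℝ =>
      ((StrongDual.toWeakDual w.1 : WeakDual ℝ X), w.2)) '' S)}

/-- Weak* closure of a subset of `l_∞(T)* × X* × ℝ` (the dual of `l_∞(T) × X × ℝ`). -/
def wclosure3 (S : Set ((Linf T →L[ℝ] ℝ) × ((X →L[ℝ] ℝ) × ℝ))) :
    Set ((Linf T →L[ℝ] ℝ) × ((X →L[ℝ] ℝ) × ℝ)) :=
  {q | ((StrongDual.toWeakDual q.1 : WeakDual ℝ (Linf T)),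
        ((StrongDual.toWeakDual q.2.1 : WeakDual ℝ X), q.2.2)) ∈
    closure ((fun w : (Linf T →L[ℝ] ℝ) × ((X →L[ℝ] ℝ) × ℝ) =>
      ((StrongDual.toWeakDual w.1 : WeakDual ℝ (Linf T)),
        ((StrongDual.toWeakDual w.2.1 : WeakDual ℝ X), w.2.2))) '' S)}

/-- Convex conic hull. -/
def coneHull {V : Type*} [AddCommMonoid V] [Module ℝ V] (S : Set V) : Set V :=
  {x | ∃ r : ℝ, 0 ≤ r ∧ ∃ y ∈ convexHull ℝ S, x = r • y}

/-- `C(p) = co(⋃ₜ gph (f_t − p_t)*)`. -/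
def Cset (f : T → X → EReal) (p : Linf T) : Set ((X →L[ℝ] ℝ) × ℝ) :=
  convexHull ℝ (⋃ t : T, gphConj (fun x => f t x - ((p t : ℝ) : EReal)))

/-- `H(p) = co(⋃ₜ epi (f_t − p_t)*)`. -/
def Hset (f : T → X → EReal) (p : Linf T) : Set ((X →L[ℝ] ℝ) × ℝ) :=
  convexHull ℝ (⋃ t : T, epiConj (fun x => f t x - ((p t : ℝ) : EReal)))

/-- Strong Slater condition for `σ(p)`. -/
def SSC (f : T → X → EReal) (p : Linf T) : Prop :=
  ∃ xh : X, (⨆ t : T, (f t xh - ((p t : ℝ) : EReal))) < 0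

/-- `x̂` is a strong Slater point for `σ(0)`. -/
def StrongSlaterPt (f : T → X → EReal) (xh : X) : Prop :=
  (⨆ t : T, f t xh) < 0


variable {X : Type*} [NormedAddCommGroup X] [NormedSpace ℝ X] {T : Type*}

/-- The index set `T̃ = {(t, u*) : u* ∈ dom f_t*}` of the linearized system. -/
def Ttilde (f : T → X → EReal) : Type _ :=
  {s : T × (X →L[ℝ] ℝ) // s.2 ∈ domConj (f s.1)}

/-- The linearized feasible solution map `F̃(ρ)`. -/
def feasTilde (f : T → X → EReal) (ρ : Linf (Ttilde f)) : Set X :=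
  {x | ∀ s : Ttilde f, ((s.1.2 x : ℝ) : EReal) - conj (f s.1.1) s.1.2 ≤ ((ρ s : ℝ) : EReal)}

/-- The embedding `p ↦ ρ_p`, `ρ_p(t, u*) = p_t`. -/
def rhoP (f : T → X → EReal) (p : Linf T) : Linf (Ttilde f) :=
  ⟨fun s => p s.1.1, memℓp_infty
    ⟨‖p‖, by rintro r ⟨s, rfl⟩; exact lp.norm_apply_le_norm ENNReal.top_ne_zero p s.1.1⟩⟩

/-- The subdifferential of convex analysis of `g` at `x`. -/
def subdiff (g : X → EReal) (x : X) : Set (X →L[ℝ] ℝ) :=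
  {u | ∀ y, ((u y - u x : ℝ) : EReal) ≤ g y - g x}

end

section myhelpers

noncomputable def lconst (T : Type*) (c : ℝ) : Linf T :=
  ⟨fun _ => c, memℓp_infty ⟨‖c‖, by rintro r ⟨t, rfl⟩; exact le_rfl⟩⟩

lemma lconst_apply {T : Type*} (c : ℝ) (t : T) : (lconst T c) t = c := rfl

lemma lconst_norm_le {T : Type*} (c : ℝ) : ‖lconst T c‖ ≤ |c| :=
  lp.norm_le_of_forall_le (abs_nonneg c) fun _ => le_of_eq (Real.norm_eq_abs c)

lemma ereal_combo {X : Type*} [AddCommMonoid X] [Module ℝ X]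
    {g : X → EReal} (hbot : ∀ x, g x ≠ ⊥)
    (hc : ∀ x y : X, ∀ a b : ℝ, 0 ≤ a → 0 ≤ b → a + b = 1 →
      g (a • x + b • y) ≤ (a : EReal) * g x + (b : EReal) * g y)
    {x y : X} {α β : ℝ} (hx : g x ≤ (α : EReal)) (hy : g y ≤ (β : EReal))
    {a b : ℝ} (ha : 0 ≤ a) (hb : 0 ≤ b) (hab : a + b = 1) :
    g (a • x + b • y) ≤ ((a * α + b * β : ℝ) : EReal) := by
  have hxt : g x ≠ ⊤ := ne_top_of_le_ne_top (EReal.coe_ne_top α) hx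
  have hyt : g y ≠ ⊤ := ne_top_of_le_ne_top (EReal.coe_ne_top β) hy
  set r : ℝ := (g x).toReal with hr
  set s : ℝ := (g y).toReal with hs
  have hgx : g x = (r : EReal) := (EReal.coe_toReal hxt (hbot x)).symm
  have hgy : g y = (s : EReal) := (EReal.coe_toReal hyt (hbot y)).symm
  have hrα : r ≤ α := by rw [hgx] at hx; exact_mod_cast hx
  have hsβ : s ≤ β := by rw [hgy] at hy; exact_mod_cast hy
  calc g (a • x + b • y) ≤ (a : EReal) * g x + (b : EReal) * g y := hc x y a b ha hb hab
    _ = ((a * r + b * s : ℝ) : EReal) := by rw [hgx, hgy]; push_cast; ring_nf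
    _ ≤ ((a * α + b * β : ℝ) : EReal) := by
        exact_mod_cast add_le_add (mul_le_mul_of_nonneg_left hrα ha)
          (mul_le_mul_of_nonneg_left hsβ hb)

lemma nonpos_on_ball_eq_zero {Z : Type*} [NormedAddCommGroup Z] [NormedSpace ℝ Z]
    (ps : Z →L[ℝ] ℝ) {ε : ℝ} (hε : 0 < ε)
    (h : ∀ p : Z, ‖p‖ ≤ ε → ps p ≤ 0) : ps = 0 := by
  ext p
  by_cases hp : p = 0
  · simp [hp]
  · have hn : 0 < ‖p‖ := norm_pos_iff.mpr hp
    have hc : 0 < ε / ‖p‖ := div_pos hε hn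
    have hnorm : ‖(ε / ‖p‖) • p‖ = ε := by
      rw [norm_smul, Real.norm_eq_abs, abs_of_pos hc]; field_simp
    have h1 := h ((ε / ‖p‖) • p) (le_of_eq hnorm)
    have h2 := h (-((ε / ‖p‖) • p)) (by rw [norm_neg]; exact le_of_eq hnorm)
    simp only [map_smul, map_neg, smul_eq_mul] at h1 h2
    have : (ε / ‖p‖) * ps p = 0 := le_antisymm h1 (by linarith)
    have := mul_eq_zero.mp this
    simp only [ContinuousLinearMap.zero_apply]
    rcases this with h | h
    · exact absurd h (ne_of_gt hc)
    · exact h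

end myhelpers

set_option maxHeartbeats 1000000 in
set_option synthInstance.maxHeartbeats 500000 in
theorem stmt_0 {T : Type*} [Nonempty T]
    {X : Type*} [NormedAddCommGroup X] [NormedSpace ℝ X] [CompleteSpace X]
    (f : T → X → EReal)
    (hproper : ∀ t, ErealProper (f t))
    (hlsc : ∀ t, LowerSemicontinuous (f t))
    (hconv : ∀ t, ErealConvexOn (f t))
    (xb : X) (hxb : xb ∈ feas f 0) :
    (∃ ℓ : ℝ, 0 ≤ ℓ ∧ LipLike (feasGraph f) 0 xb ℓ) ↔
      (∀ ps : Linf T →L[ℝ] ℝ, coderivMem (feasGraph f) xb 0 ps → ps = 0) := by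
  classical
  set D : Set (Linf T) := {p | ∃ x, x ∈ feas f p} with hDdef
  -- from a Slater point, a whole ball is contained in D
  have hballD : ∀ ε : ℝ, 0 < ε → ∀ xh : X, (∀ t, f t xh ≤ ((-ε : ℝ) : EReal)) →
      ∀ p : Linf T, ‖p‖ ≤ ε → p ∈ D := by
    intro ε hε xh hxh p hp
    refine ⟨xh, fun t => le_trans (hxh t) ?_⟩
    have h2 : |p t| ≤ ε := le_trans
      (by simpa [Real.norm_eq_abs] using lp.norm_apply_le_norm ENNReal.top_ne_zero p t) hp
    have : -ε ≤ p t := by linarith [(abs_le.mp h2).1]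
    exact_mod_cast this
  -- membership in D gives nonpositivity of any coderivative functional
  have hDle : ∀ ps : Linf T →L[ℝ] ℝ, coderivMem (feasGraph f) xb 0 ps →
      ∀ p ∈ D, ps p ≤ 0 := by
    intro ps hps p hp
    obtain ⟨x, hx⟩ := hp
    have := hps (p, x) hx
    simpa using this
  -- A strong Slater point yields the Lipschitz-like property
  have hSlaterLip : ∀ ε : ℝ, 0 < ε → ∀ xh : X, (∀ t, f t xh ≤ ((-ε : ℝ) : EReal)) →
      ∃ ℓ : ℝ, 0 ≤ ℓ ∧ LipLike (feasGraph f) 0 xb ℓ := by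
    intro ε hε xh hxh
    refine ⟨2 * (‖xb - xh‖ + 1) / ε, by positivity,
      Metric.ball 0 (ε / 2), Metric.ball_mem_nhds _ (by linarith),
      Metric.ball xb 1, Metric.ball_mem_nhds _ one_pos, ?_⟩
    intro p hp u hu x hxV hpx
    set d := ‖p - u‖ with hd
    set lam := min (2 * d / ε) 1 with hlamdef
    have hd0 : 0 ≤ d := norm_nonneg _
    have hlam0 : 0 ≤ lam := le_min (by positivity) zero_le_one
    have hlam1 : lam ≤ 1 := min_le_right _ _
    have hpn : ‖p‖ < ε / 2 := by simpa using mem_ball_zero_iff.mp hp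
    have hun : ‖u‖ < ε / 2 := by simpa using mem_ball_zero_iff.mp hu
    refine ⟨(1 - lam) • x + lam • xh, ?_, ?_⟩
    · intro t
      have key := ereal_combo ((hproper t).1) (hconv t) (hpx t) (hxh t)
        (sub_nonneg.mpr hlam1) hlam0 (by ring)
      refine le_trans key ?_
      have h1 : p t - u t ≤ d := by
        have h := lp.norm_apply_le_norm ENNReal.top_ne_zero (p - u) t
        simp only [lp.coeFn_sub, Pi.sub_apply, Real.norm_eq_abs] at h
        exact le_trans (le_abs_self _) h
      have h2 : -(ε / 2) ≤ p t := by
        have := le_trans (by simpa [Real.norm_eq_abs] using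
          lp.norm_apply_le_norm ENNReal.top_ne_zero p t) hpn.le
        linarith [(abs_le.mp this).1]
      have h3 : -(ε / 2) ≤ u t := by
        have := le_trans (by simpa [Real.norm_eq_abs] using
          lp.norm_apply_le_norm ENNReal.top_ne_zero u t) hun.le
        linarith [(abs_le.mp this).1]
      have goalR : (1 - lam) * p t + lam * (-ε) ≤ u t := by
        by_cases hc : 2 * d / ε ≤ 1
        · have hlameq : lam = 2 * d / ε := min_eq_left hc
          have hlε : lam * ε = 2 * d := by rw [hlameq]; field_simp
          nlinarith [mul_le_mul_of_nonneg_left h2 hlam0]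
        · have hlameq : lam = 1 := min_eq_right (le_of_lt (not_le.mp hc))
          rw [hlameq]; linarith
      exact_mod_cast goalR
    · have heq : x - ((1 - lam) • x + lam • xh) = lam • (x - xh) := by
        rw [smul_sub, sub_smul, one_smul]; abel
      rw [heq, norm_smul, Real.norm_eq_abs, abs_of_nonneg hlam0]
      have hxM : ‖x - xh‖ ≤ ‖xb - xh‖ + 1 := by
        have hx1 : ‖x - xb‖ < 1 := by
          rw [Metric.mem_ball, dist_eq_norm] at hxV; exact hxV
        calc ‖x - xh‖ = ‖(x - xb) + (xb - xh)‖ := by abel_nf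
          _ ≤ ‖x - xb‖ + ‖xb - xh‖ := norm_add_le _ _
          _ ≤ ‖xb - xh‖ + 1 := by linarith
      have hlamle : lam ≤ 2 * d / ε := min_le_left _ _
      calc lam * ‖x - xh‖ ≤ (2 * d / ε) * (‖xb - xh‖ + 1) :=
            mul_le_mul hlamle hxM (norm_nonneg _) (by positivity)
        _ = 2 * (‖xb - xh‖ + 1) / ε * ‖p - u‖ := by rw [hd]; ring
  constructor
  · -- Lipschitz-like ⇒ coderivative condition
    rintro ⟨ℓ, hℓ, U, hU, V, hV, hLip⟩ ps hps
    obtain ⟨δ, hδ, hball⟩ := Metric.mem_nhds_iff.mp hU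
    have h0U : (0 : Linf T) ∈ U := mem_of_mem_nhds hU
    have hxbV : xb ∈ V := mem_of_mem_nhds hV
    have huU : lconst T (-(δ / 2)) ∈ U := hball (by
      rw [Metric.mem_ball, dist_zero_right]
      calc ‖lconst T (-(δ / 2))‖ ≤ |(-(δ / 2))| := lconst_norm_le _
        _ < δ := by rw [abs_neg, abs_of_nonneg (by linarith)]; linarith)
    obtain ⟨xh, hxhG, -⟩ := hLip 0 h0U (lconst T (-(δ / 2))) huU xb hxbV hxb
    have hxh : ∀ t, f t xh ≤ ((-(δ / 2) : ℝ) : EReal) := fun t => hxhG t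
    refine nonpos_on_ball_eq_zero ps (show (0:ℝ) < δ / 2 by linarith) ?_
    intro p hp
    exact hDle ps hps p (hballD (δ / 2) (by linarith) xh hxh p hp)
  · -- coderivative condition ⇒ Lipschitz-like
    intro hcod
    have hSlater : ∃ ε : ℝ, 0 < ε ∧ ∃ xh : X, ∀ t, f t xh ≤ ((-ε : ℝ) : EReal) := by
      by_contra hno
      push_neg at hno
      have hDconv : Convex ℝ D := by
        intro p hp q hq a b ha hb hab
        obtain ⟨x, hx⟩ := hp
        obtain ⟨y, hy⟩ := hq
        refine ⟨a • x + b • y, fun t => ?_⟩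
        refine le_trans (ereal_combo ((hproper t).1) (hconv t) (hx t) (hy t) ha hb hab)
          (le_of_eq ?_)
        have : (a • p + b • q) t = a * p t + b * q t := by
          simp [lp.coeFn_add, lp.coeFn_smul, Pi.add_apply, Pi.smul_apply, smul_eq_mul]
          rfl
        rw [this]
      have hc1 : lconst T 1 ∈ interior D := by
        rw [mem_interior_iff_mem_nhds, Metric.mem_nhds_iff]
        refine ⟨1, one_pos, fun q hq => ⟨xb, fun t => ?_⟩⟩
        have hq1 : |q t - 1| < 1 := by
          rw [Metric.mem_ball, dist_eq_norm] at hq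
          have h := lp.norm_apply_le_norm ENNReal.top_ne_zero (q - lconst T 1) t
          simp only [lp.coeFn_sub, Pi.sub_apply, Real.norm_eq_abs, lconst_apply] at h
          exact lt_of_le_of_lt h hq
        have hq0 : (0 : ℝ) ≤ q t := by linarith [(abs_lt.mp hq1).1]
        have h0 : f t xb ≤ ((0 : ℝ) : EReal) := by
          have := hxb t
          simpa using this
        exact le_trans h0 (by exact_mod_cast hq0)
      have h0D : (0 : Linf T) ∉ interior D := by
        intro h0
        rw [mem_interior_iff_mem_nhds, Metric.mem_nhds_iff] at h0
        obtain ⟨δ, hδ, hball⟩ := h0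
        have hmem : lconst T (-(δ / 2)) ∈ D := hball (by
          rw [Metric.mem_ball, dist_zero_right]
          calc ‖lconst T (-(δ / 2))‖ ≤ |(-(δ / 2))| := lconst_norm_le _
            _ < δ := by rw [abs_neg, abs_of_nonneg (by linarith)]; linarith)
        obtain ⟨xh, hxh⟩ := hmem
        obtain ⟨t, ht⟩ := hno (δ / 2) (by linarith) xh
        exact absurd (hxh t) (not_le.mpr ht)
      obtain ⟨ps, hps⟩ := geometric_hahn_banach_open_point
        (hDconv.interior) isOpen_interior h0D
      have hps0 : ∀ a ∈ interior D, ps a < 0 := by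
        intro a ha
        have := hps a ha
        simpa using this
      have hle : ∀ p ∈ D, ps p ≤ 0 := by
        intro p hp
        have hseq : ∀ n : ℕ, (1 / (n + 1 : ℝ)) * ps (lconst T 1)
            + (1 - 1 / (n + 1 : ℝ)) * ps p < 0 := by
          intro n
          have hn1 : (0 : ℝ) < 1 / (n + 1 : ℝ) := by positivity
          have hn2 : 1 / (n + 1 : ℝ) ≤ 1 := by
            rw [div_le_one (by positivity)]; linarith [Nat.cast_nonneg (α := ℝ) n]
          have hmem := hDconv.combo_interior_self_mem_interior (a := 1 / (n + 1 : ℝ))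
            (b := 1 - 1 / (n + 1 : ℝ)) hc1 hp hn1 (by linarith) (by ring)
          have harg := hps0 _ hmem
          rw [map_add, map_smul, map_smul, smul_eq_mul, smul_eq_mul] at harg
          exact harg
        have htend : Filter.Tendsto
            (fun n : ℕ => (1 / (n + 1 : ℝ)) * ps (lconst T 1)
              + (1 - 1 / (n + 1 : ℝ)) * ps p) Filter.atTop (nhds (ps p)) := by
          have h0 : Filter.Tendsto (fun n : ℕ => 1 / (n + 1 : ℝ)) Filter.atTop (nhds 0) :=
            tendsto_one_div_add_atTop_nhds_zero_nat
          have h1 : Filter.Tendsto (fun n : ℕ => (1 : ℝ) - 1 / (n + 1 : ℝ))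
              Filter.atTop (nhds (1 - 0)) := tendsto_const_nhds.sub h0
          have := (h0.mul_const (ps (lconst T 1))).add (h1.mul_const (ps p))
          simpa using this
        exact le_of_tendsto htend (Filter.Eventually.of_forall fun n => (hseq n).le)
      have hzero : ps = 0 := hcod ps (fun q hq => by
        have := hle q.1 ⟨q.2, hq⟩
        simpa using this)
      have := hps0 _ hc1
      rw [hzero] at this
      simp at this
    obtain ⟨ε, hε, xh, hxh⟩ := hSlater
    exact hSlaterLip ε hε xh hxh
end

section
/- Let σ(p) = {⟨a_t*, x⟩ ≤ b_t + p_t, t ∈ T} be a parametric linear inequality system in a Banach space X, and assume the coefficient set {a_t* : t ∈ T} is bounded in X*. Then for every x̄ ∈ F(0): { (u*, α) ∈ cl* C(0) : α = ⟨u*, x̄⟩ } = ⋂_{ε>0} cl* co{ (a_t*, b_t) : t ∈ T_ε(x̄) }, where T_ε(x̄) = { t ∈ T : ⟨a_t*, x̄⟩ ≥ b_t − ε } is the set of ε-active indices. -/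
open Filter
open scoped ENNReal

section AuxStmt7

variable {X : Type*} [NormedAddCommGroup X] [NormedSpace ℝ X]


lemma slack_affine (xb : X) (w₁ w₂ : (X →L[ℝ] ℝ) × ℝ) (s t : ℝ) :
    (s • w₁ + t • w₂).2 - (s • w₁ + t • w₂).1 xb
      = s * (w₁.2 - w₁.1 xb) + t * (w₂.2 - w₂.1 xb) := by
  simp only [Prod.fst_add, Prod.snd_add, Prod.smul_fst, Prod.smul_snd,
    ContinuousLinearMap.add_apply, ContinuousLinearMap.coe_smul', Pi.smul_apply,
    smul_eq_mul]
  ring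

lemma convex_slack_ge (xb : X) (c : ℝ) :
    Convex ℝ {w : (X →L[ℝ] ℝ) × ℝ | c ≤ w.2 - w.1 xb} := by
  intro w₁ h₁ w₂ h₂ s t hs ht hst
  simp only [Set.mem_setOf_eq] at *
  rw [slack_affine]
  have hc : s * c + t * c = c := by rw [← add_mul, hst, one_mul]
  nlinarith [mul_le_mul_of_nonneg_left h₁ hs, mul_le_mul_of_nonneg_left h₂ ht]

lemma convex_slack_le (xb : X) (c : ℝ) :
    Convex ℝ {w : (X →L[ℝ] ℝ) × ℝ | w.2 - w.1 xb ≤ c} := by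
  intro w₁ h₁ w₂ h₂ s t hs ht hst
  simp only [Set.mem_setOf_eq] at *
  rw [slack_affine]
  have hc : s * c + t * c = c := by rw [← add_mul, hst, one_mul]
  nlinarith [mul_le_mul_of_nonneg_left h₁ hs, mul_le_mul_of_nonneg_left h₂ ht]

set_option maxHeartbeats 2000000 in
lemma approx_lemma {T : Type*} [Nonempty T]
    (a : T → X →L[ℝ] ℝ) (b : T → ℝ) (M : ℝ) (hM : ∀ t, ‖a t‖ ≤ M)
    (xb : X) (hxb : ∀ t, a t xb ≤ b t) (ε : ℝ) (hε : 0 < ε) :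
    ∃ K : ℝ, ∀ w ∈ convexHull ℝ {w : (X →L[ℝ] ℝ) × ℝ | ∃ t : T, w = (a t, b t)},
      w.2 - w.1 xb < ε / 2 →
      ∃ w' ∈ convexHull ℝ {w : (X →L[ℝ] ℝ) × ℝ | ∃ t : T, b t - ε ≤ a t xb ∧ w = (a t, b t)},
        ‖w'.1 - w.1‖ ≤ K * (w.2 - w.1 xb) ∧
        |w'.2 - w.2| ≤ K * (w.2 - w.1 xb) := by
  have hM0 : 0 ≤ M := le_trans (norm_nonneg _) (hM (Classical.arbitrary T))
  refine ⟨(2*M + 2*M*‖xb‖)/ε + 2, ?_⟩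
  intro w hw hslt
  rw [convexHull_eq] at hw
  obtain ⟨ι, tf, lam, z, h0, h1, hzS, hcm⟩ := hw
  have hτ' : ∀ i, ∃ t : T, i ∈ tf → z i = (a t, b t) := by
    intro i
    by_cases hi : i ∈ tf
    · obtain ⟨t, ht⟩ := hzS i hi; exact ⟨t, fun _ => ht⟩
    · exact ⟨Classical.arbitrary T, fun h => absurd h hi⟩
  choose τ hτ using hτ'
  set sl : ι → ℝ := fun i => b (τ i) - (a (τ i)) xb with hsl
  have hsl0 : ∀ i, 0 ≤ sl i := fun i => sub_nonneg.2 (hxb _)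
  have hwsum : w = ∑ i ∈ tf, lam i • (a (τ i), b (τ i)) := by
    rw [← hcm, Finset.centerMass_eq_of_sum_1 _ _ h1]
    exact Finset.sum_congr rfl fun i hi => by rw [hτ i hi]
  have hw1 : w.1 = ∑ i ∈ tf, lam i • a (τ i) := by
    rw [hwsum, Prod.fst_sum]
    simp [Prod.smul_fst]
  have hw2 : w.2 = ∑ i ∈ tf, lam i * b (τ i) := by
    rw [hwsum, Prod.snd_sum]
    simp [Prod.smul_snd, smul_eq_mul]
  have hwx : w.1 xb = ∑ i ∈ tf, lam i * (a (τ i)) xb := by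
    rw [hw1]
    simp [ContinuousLinearMap.sum_apply]
  set s : ℝ := w.2 - w.1 xb with hsdef
  have hs_eq : s = ∑ i ∈ tf, lam i * sl i := by
    rw [hsdef, hw2, hwx, ← Finset.sum_sub_distrib]
    exact Finset.sum_congr rfl fun i _ => by simp [hsl]; ring
  have hs0 : 0 ≤ s := by
    rw [hs_eq]
    exact Finset.sum_nonneg fun i hi => mul_nonneg (h0 i hi) (hsl0 i)
  classical
  set A : Finset ι := tf.filter (fun i => sl i ≤ ε) with hAdef
  set I : Finset ι := tf.filter (fun i => ¬ sl i ≤ ε) with hIdef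
  set ν : ℝ := ∑ i ∈ A, lam i with hνdef
  set μ : ℝ := ∑ i ∈ I, lam i with hμdef
  have hsplit : ν + μ = 1 := by
    rw [hνdef, hμdef, Finset.sum_filter_add_sum_filter_not tf _ lam, h1]
  have hν0 : 0 ≤ ν :=
    Finset.sum_nonneg fun i hi => h0 i (Finset.filter_subset _ _ hi)
  have hμ0 : 0 ≤ μ :=
    Finset.sum_nonneg fun i hi => h0 i (Finset.filter_subset _ _ hi)
  have hμε : ε * μ ≤ s := by
    have h₁ : ∑ i ∈ I, lam i * ε ≤ ∑ i ∈ I, lam i * sl i := by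
      refine Finset.sum_le_sum fun i hi => ?_
      have := (Finset.mem_filter.1 hi).2
      exact mul_le_mul_of_nonneg_left (le_of_not_ge this)
        (h0 i (Finset.filter_subset _ _ hi))
    have h₂ : ∑ i ∈ I, lam i * sl i ≤ s := by
      rw [hs_eq]
      refine Finset.sum_le_sum_of_subset_of_nonneg (Finset.filter_subset _ _)
        fun i hi _ => mul_nonneg (h0 i hi) (hsl0 i)
    calc ε * μ = ∑ i ∈ I, lam i * ε := by
          rw [hμdef, Finset.mul_sum]
          exact Finset.sum_congr rfl fun i _ => mul_comm _ _
    _ ≤ s := le_trans h₁ h₂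
  have hμhalf : μ < 1/2 := by
    by_contra hcon
    push_neg at hcon
    have := mul_le_mul_of_nonneg_left hcon hε.le
    linarith
  have hνpos : 0 < ν := by linarith
  -- the truncated point
  set w' : (X →L[ℝ] ℝ) × ℝ := A.centerMass lam (fun i => (a (τ i), b (τ i))) with hw'def
  have hw'mem : w' ∈ convexHull ℝ
      {w : (X →L[ℝ] ℝ) × ℝ | ∃ t : T, b t - ε ≤ a t xb ∧ w = (a t, b t)} := by
    refine Finset.centerMass_mem_convexHull A
      (fun i hi => h0 i (Finset.filter_subset _ _ hi)) (by rwa [← hνdef]) ?_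
    intro i hi
    have hiε := (Finset.mem_filter.1 hi).2
    have h' : b (τ i) - (a (τ i)) xb ≤ ε := hiε
    exact ⟨τ i, by linarith, rfl⟩
  -- component sums
  set uA : X →L[ℝ] ℝ := ∑ i ∈ A, lam i • a (τ i) with huAdef
  set uI : X →L[ℝ] ℝ := ∑ i ∈ I, lam i • a (τ i) with huIdef
  set βA : ℝ := ∑ i ∈ A, lam i * b (τ i) with hβAdef
  set βI : ℝ := ∑ i ∈ I, lam i * b (τ i) with hβIdef
  have hw1' : w.1 = uA + uI := by
    rw [hw1, huAdef, huIdef, hAdef, hIdef, Finset.sum_filter_add_sum_filter_not]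
  have hw2' : w.2 = βA + βI := by
    rw [hw2, hβAdef, hβIdef, hAdef, hIdef, Finset.sum_filter_add_sum_filter_not]
  have hw'1 : w'.1 = ν⁻¹ • uA := by
    rw [hw'def]
    simp only [Finset.centerMass, Prod.smul_fst, Prod.fst_sum]; rfl
  have hw'2 : w'.2 = ν⁻¹ * βA := by
    rw [hw'def]
    simp only [Finset.centerMass, Prod.smul_snd, Prod.snd_sum, smul_eq_mul, hβAdef]; rfl
  -- norm bounds
  have huA : ‖uA‖ ≤ ν * M := by
    calc ‖uA‖ ≤ ∑ i ∈ A, ‖lam i • a (τ i)‖ := norm_sum_le _ _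
    _ ≤ ∑ i ∈ A, lam i * M := by
        refine Finset.sum_le_sum fun i hi => ?_
        have h0i := h0 i (Finset.filter_subset _ _ hi)
        have hns := norm_smul_le (lam i) (a (τ i))
        rw [Real.norm_eq_abs, abs_of_nonneg h0i] at hns
        exact hns.trans (mul_le_mul_of_nonneg_left (hM _) h0i)
    _ = ν * M := by rw [hνdef, Finset.sum_mul]
  have huI : ‖uI‖ ≤ μ * M := by
    calc ‖uI‖ ≤ ∑ i ∈ I, ‖lam i • a (τ i)‖ := norm_sum_le _ _
    _ ≤ ∑ i ∈ I, lam i * M := by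
        refine Finset.sum_le_sum fun i hi => ?_
        have h0i := h0 i (Finset.filter_subset _ _ hi)
        have hns := norm_smul_le (lam i) (a (τ i))
        rw [Real.norm_eq_abs, abs_of_nonneg h0i] at hns
        exact hns.trans (mul_le_mul_of_nonneg_left (hM _) h0i)
    _ = μ * M := by rw [hμdef, Finset.sum_mul]
  -- slack sums
  set sA : ℝ := ∑ i ∈ A, lam i * sl i with hsAdef
  set sI : ℝ := ∑ i ∈ I, lam i * sl i with hsIdef
  have hsA0 : 0 ≤ sA :=
    Finset.sum_nonneg fun i hi => mul_nonneg (h0 i (Finset.filter_subset _ _ hi)) (hsl0 i)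
  have hsI0 : 0 ≤ sI :=
    Finset.sum_nonneg fun i hi => mul_nonneg (h0 i (Finset.filter_subset _ _ hi)) (hsl0 i)
  have hsAI : sA + sI = s := by
    rw [hsAdef, hsIdef, hAdef, hIdef, Finset.sum_filter_add_sum_filter_not, ← hs_eq]
  have hb_abs : ∀ i, |b (τ i)| ≤ M * ‖xb‖ + sl i := by
    intro i
    have h1' : |(a (τ i)) xb| ≤ M * ‖xb‖ := by
      calc |(a (τ i)) xb| = ‖(a (τ i)) xb‖ := (Real.norm_eq_abs _).symm
      _ ≤ ‖a (τ i)‖ * ‖xb‖ := (a (τ i)).le_opNorm xb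
      _ ≤ M * ‖xb‖ := mul_le_mul_of_nonneg_right (hM _) (norm_nonneg _)
    have hbi : b (τ i) = (a (τ i)) xb + sl i := by simp [hsl]
    rw [hbi]
    calc |(a (τ i)) xb + sl i| ≤ |(a (τ i)) xb| + |sl i| := abs_add_le _ _
    _ ≤ M * ‖xb‖ + sl i := by rw [abs_of_nonneg (hsl0 i)]; linarith
  have hβA : |βA| ≤ ν * (M * ‖xb‖) + sA := by
    calc |βA| ≤ ∑ i ∈ A, |lam i * b (τ i)| := Finset.abs_sum_le_sum_abs _ _
    _ ≤ ∑ i ∈ A, (lam i * (M * ‖xb‖) + lam i * sl i) := by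
        refine Finset.sum_le_sum fun i hi => ?_
        have h0i := h0 i (Finset.filter_subset _ _ hi)
        rw [abs_mul, abs_of_nonneg h0i, ← mul_add]
        exact mul_le_mul_of_nonneg_left (hb_abs i) h0i
    _ = ν * (M * ‖xb‖) + sA := by
        rw [Finset.sum_add_distrib, hνdef, hsAdef, Finset.sum_mul]
  have hβI : |βI| ≤ μ * (M * ‖xb‖) + sI := by
    calc |βI| ≤ ∑ i ∈ I, |lam i * b (τ i)| := Finset.abs_sum_le_sum_abs _ _
    _ ≤ ∑ i ∈ I, (lam i * (M * ‖xb‖) + lam i * sl i) := by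
        refine Finset.sum_le_sum fun i hi => ?_
        have h0i := h0 i (Finset.filter_subset _ _ hi)
        rw [abs_mul, abs_of_nonneg h0i, ← mul_add]
        exact mul_le_mul_of_nonneg_left (hb_abs i) h0i
    _ = μ * (M * ‖xb‖) + sI := by
        rw [Finset.sum_add_distrib, hμdef, hsIdef, Finset.sum_mul]
  -- inverse facts
  have hνν : ν⁻¹ * ν = 1 := inv_mul_cancel₀ (ne_of_gt hνpos)
  have hνinv_nonneg : (0:ℝ) ≤ ν⁻¹ := inv_nonneg.2 hν0
  have hfact' : (ν⁻¹ - 1) * ν = 1 - ν := by rw [sub_mul, hνν, one_mul]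
  have hfact : (ν⁻¹ - 1) * ν = μ := by rw [hfact']; linarith
  have hquot : ν⁻¹ - 1 = μ / ν := by
    rw [eq_div_iff (ne_of_gt hνpos)]; exact hfact
  have hνinv0 : 0 ≤ ν⁻¹ - 1 := by rw [hquot]; exact div_nonneg hμ0 hν0
  have hνinv2 : ν⁻¹ - 1 ≤ 1 := by
    rw [hquot, div_le_one hνpos]; linarith
  -- key quantitative bounds
  have key1 : ‖w'.1 - w.1‖ ≤ 2 * μ * M := by
    have hd : w'.1 - w.1 = (ν⁻¹ - 1) • uA - uI := by
      rw [hw'1, hw1']; module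
    rw [hd]
    calc ‖(ν⁻¹ - 1) • uA - uI‖ ≤ ‖(ν⁻¹ - 1) • uA‖ + ‖uI‖ := norm_sub_le _ _
    _ ≤ (ν⁻¹ - 1) * ‖uA‖ + ‖uI‖ := by
        have hns := norm_smul_le (ν⁻¹ - 1) uA
        rw [Real.norm_eq_abs, abs_of_nonneg hνinv0] at hns
        exact add_le_add_left hns _
    _ ≤ (ν⁻¹ - 1) * (ν * M) + μ * M := by
        refine add_le_add (mul_le_mul_of_nonneg_left huA hνinv0) huI
    _ = 2 * μ * M := by rw [← mul_assoc, hfact]; ring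
  have key2 : |w'.2 - w.2| ≤ 2 * μ * (M * ‖xb‖) + (sA + sI) := by
    have hd : w'.2 - w.2 = (ν⁻¹ - 1) * βA - βI := by
      rw [hw'2, hw2']; ring
    rw [hd]
    calc |(ν⁻¹ - 1) * βA - βI| ≤ |(ν⁻¹ - 1) * βA| + |βI| := abs_sub _ _
    _ = (ν⁻¹ - 1) * |βA| + |βI| := by rw [abs_mul, abs_of_nonneg hνinv0]
    _ ≤ (ν⁻¹ - 1) * (ν * (M * ‖xb‖) + sA) + (μ * (M * ‖xb‖) + sI) := by
        refine add_le_add (mul_le_mul_of_nonneg_left hβA hνinv0) hβI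
    _ ≤ 2 * μ * (M * ‖xb‖) + (sA + sI) := by
        have e0 : (ν⁻¹ - 1) * (ν * (M * ‖xb‖) + sA)
            = (ν⁻¹ - 1) * (ν * (M * ‖xb‖)) + (ν⁻¹ - 1) * sA := mul_add _ _ _
        have e1 : (ν⁻¹ - 1) * (ν * (M * ‖xb‖)) = μ * (M * ‖xb‖) := by
          rw [← mul_assoc, hfact]
        have e2 : (ν⁻¹ - 1) * sA ≤ 1 * sA := mul_le_mul_of_nonneg_right hνinv2 hsA0
        linarith [e0, e1, e2]
  -- conclude
  refine ⟨w', hw'mem, ?_, ?_⟩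
  · have h2Ms : 2 * μ * M ≤ 2 * M * s / ε := by
      rw [le_div_iff₀ hε]
      have := mul_le_mul_of_nonneg_left hμε (by linarith : (0:ℝ) ≤ 2 * M)
      linarith [this]
    have hrest : 0 ≤ 2 * M * ‖xb‖ * s / ε := by positivity
    have hKs : ((2*M + 2*M*‖xb‖)/ε + 2) * s = 2*M*s/ε + 2*M*‖xb‖*s/ε + 2*s := by ring
    rw [hKs]
    linarith [key1]
  · have h2Mxs : 2 * μ * (M * ‖xb‖) ≤ 2 * M * ‖xb‖ * s / ε := by
      rw [le_div_iff₀ hε]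
      have := mul_le_mul_of_nonneg_left hμε (by positivity : (0:ℝ) ≤ 2 * M * ‖xb‖)
      linarith [this]
    have hrest : 0 ≤ 2 * M * s / ε := by positivity
    have hKs : ((2*M + 2*M*‖xb‖)/ε + 2) * s = 2*M*s/ε + 2*M*‖xb‖*s/ε + 2*s := by ring
    rw [hKs]
    have : sA + sI = s := hsAI
    linarith [key2]

end AuxStmt7

theorem stmt_7 {T : Type*} [Nonempty T]
    {X : Type*} [NormedAddCommGroup X] [NormedSpace ℝ X] [CompleteSpace X]
    (a : T → X →L[ℝ] ℝ) (b : T → ℝ)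
    (hbdd : Bornology.IsBounded (Set.range a))
    (C0 : Set ((X →L[ℝ] ℝ) × ℝ)) (hC0 : C0 = convexHull ℝ {w | ∃ t : T, w = (a t, b t)})
    (xb : X) (hxb : ∀ t : T, a t xb ≤ b t) :
    {q : (X →L[ℝ] ℝ) × ℝ | q ∈ wclosure2 C0 ∧ q.2 = q.1 xb} =
      ⋂ ε ∈ Set.Ioi (0 : ℝ),
        wclosure2 (convexHull ℝ {w : (X →L[ℝ] ℝ) × ℝ |
          ∃ t : T, b t - ε ≤ a t xb ∧ w = (a t, b t)}) := by
  classical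
  obtain ⟨M, hM⟩ := isBounded_iff_forall_norm_le.1 hbdd
  have hM' : ∀ t, ‖a t‖ ≤ M := fun t => hM _ ⟨t, rfl⟩
  set φ : ((X →L[ℝ] ℝ) × ℝ) → (WeakDual ℝ X) × ℝ :=
    fun w => ((StrongDual.toWeakDual w.1 : WeakDual ℝ X), w.2) with hφdef
  have hφinj : Function.Injective φ := by
    intro w₁ w₂ h
    have h1 := congrArg Prod.fst h
    have h2 := congrArg Prod.snd h
    exact Prod.ext (LinearEquiv.injective StrongDual.toWeakDual h1) h2
  have hgcont : Continuous (fun z : WeakDual ℝ X × ℝ => z.2 - z.1 xb) :=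
    continuous_snd.sub ((WeakDual.eval_continuous xb).comp continuous_fst)
  ext q
  simp only [Set.mem_setOf_eq, Set.mem_iInter]
  constructor
  · rintro ⟨hqC, hqeq⟩ ε hε
    have hε' : (0:ℝ) < ε := hε
    set Sε : Set ((X →L[ℝ] ℝ) × ℝ) :=
      {w | ∃ t : T, b t - ε ≤ a t xb ∧ w = (a t, b t)} with hSεdef
    set Dε := convexHull ℝ Sε with hDεdef
    show φ q ∈ closure (φ '' Dε)
    have hqC' : φ q ∈ closure (φ '' C0) := hqC
    rw [mem_closure_iff_nhds_ne_bot] at hqC' ⊢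
    set L := nhds (φ q) ⊓ Filter.principal (φ '' C0) with hLdef
    have hL : L.NeBot := Filter.neBot_iff.2 hqC'
    set F := Filter.comap φ L with hFdef
    have hFneBot : F.NeBot := by
      refine Filter.comap_neBot_iff.2 fun t ht => ?_
      have hmem : t ∩ (φ '' C0) ∈ L :=
        Filter.inter_mem ht (Filter.mem_inf_of_right (Filter.mem_principal_self _))
      obtain ⟨z, hzt, w, hwC, rfl⟩ := Filter.nonempty_of_mem hmem
      exact ⟨w, hzt⟩
    have hφtend : Filter.Tendsto φ F (nhds (φ q)) :=
      Filter.map_comap_le.trans inf_le_left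
    have hC0ev : ∀ᶠ w in F, w ∈ C0 := by
      have himg : φ '' C0 ∈ L := Filter.mem_inf_of_right (Filter.mem_principal_self _)
      have h2 : φ ⁻¹' (φ '' C0) ∈ F := Filter.preimage_mem_comap himg
      rwa [Set.preimage_image_eq _ hφinj] at h2
    have heval : ∀ x : X, Filter.Tendsto (fun w : (X →L[ℝ] ℝ) × ℝ => w.1 x) F (nhds (q.1 x)) := by
      intro x
      have hc : Continuous (fun z : WeakDual ℝ X × ℝ => z.1 x) :=
        (WeakDual.eval_continuous x).comp continuous_fst
      exact (hc.tendsto (φ q)).comp hφtend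
    have hsnd : Filter.Tendsto (fun w : (X →L[ℝ] ℝ) × ℝ => w.2) F (nhds q.2) :=
      (continuous_snd.tendsto (φ q)).comp hφtend
    have hgD : Filter.Tendsto (fun w : (X →L[ℝ] ℝ) × ℝ => w.2 - w.1 xb) F (nhds 0) := by
      have h2 := hsnd.sub (heval xb)
      rwa [hqeq, sub_self] at h2
    have hsmall : ∀ᶠ w in F, w.2 - w.1 xb < ε / 2 :=
      hgD.eventually_lt_const (by positivity)
    obtain ⟨K, hK⟩ := approx_lemma a b M hM' xb hxb ε hε'
    have hchoice : ∀ w : (X →L[ℝ] ℝ) × ℝ, ∃ w',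
        (w ∈ C0 ∧ w.2 - w.1 xb < ε / 2) →
        w' ∈ Dε ∧ ‖w'.1 - w.1‖ ≤ K * (w.2 - w.1 xb) ∧
          |w'.2 - w.2| ≤ K * (w.2 - w.1 xb) := by
      intro w
      by_cases hw : w ∈ C0 ∧ w.2 - w.1 xb < ε / 2
      · have hwmem : w ∈ convexHull ℝ {w : (X →L[ℝ] ℝ) × ℝ | ∃ t : T, w = (a t, b t)} := by
          rw [← hC0]; exact hw.1
        obtain ⟨w', hmem, h1, h2⟩ := hK w hwmem hw.2
        exact ⟨w', fun _ => ⟨hmem, h1, h2⟩⟩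
      · exact ⟨q, fun h => absurd h hw⟩
    choose h hh using hchoice
    have hev : ∀ᶠ w in F, h w ∈ Dε ∧ ‖(h w).1 - w.1‖ ≤ K * (w.2 - w.1 xb) ∧
        |(h w).2 - w.2| ≤ K * (w.2 - w.1 xb) :=
      (hC0ev.and hsmall).mono fun w hw => hh w hw
    have hKg : Filter.Tendsto (fun w : (X →L[ℝ] ℝ) × ℝ => K * (w.2 - w.1 xb)) F (nhds 0) := by
      simpa using hgD.const_mul K
    have hsnd' : Filter.Tendsto (fun w => (h w).2) F (nhds q.2) := by
      have hdiff : Filter.Tendsto (fun w => (h w).2 - w.2) F (nhds 0) := by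
        refine squeeze_zero_norm' (hev.mono fun w hw => ?_) hKg
        simpa [Real.norm_eq_abs] using hw.2.2
      have h2 := hdiff.add hsnd
      rw [zero_add] at h2
      exact h2.congr fun w => by ring
    have heval' : ∀ x : X, Filter.Tendsto (fun w => (h w).1 x) F (nhds (q.1 x)) := by
      intro x
      have hdiff : Filter.Tendsto (fun w => ((h w).1 - w.1) x) F (nhds 0) := by
        refine squeeze_zero_norm' (a := fun w => K * (w.2 - w.1 xb) * ‖x‖)
          (hev.mono fun w hw => ?_) (by simpa using hKg.mul_const ‖x‖)
        calc ‖((h w).1 - w.1) x‖ ≤ ‖(h w).1 - w.1‖ * ‖x‖ := ((h w).1 - w.1).le_opNorm x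
        _ ≤ K * (w.2 - w.1 xb) * ‖x‖ := mul_le_mul_of_nonneg_right hw.2.1 (norm_nonneg x)
      have h2 := hdiff.add (heval x)
      rw [zero_add] at h2
      refine h2.congr fun w => ?_
      simp [ContinuousLinearMap.sub_apply]
    have hφh : Filter.Tendsto (fun w => φ (h w)) F (nhds (φ q)) := by
      have hfst : Filter.Tendsto (fun w => (StrongDual.toWeakDual (h w).1 : WeakDual ℝ X))
          F (nhds (StrongDual.toWeakDual q.1 : WeakDual ℝ X)) := by
        rw [tendsto_iff_forall_eval_tendsto_topDualPairing]
        intro y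
        exact heval' y
      have := hfst.prodMk_nhds hsnd'
      exact this
    have himg : ∀ᶠ w in F, φ (h w) ∈ φ '' Dε := hev.mono fun w hw => ⟨h w, hw.1, rfl⟩
    have hmap : Filter.NeBot (Filter.map (fun w => φ (h w)) F) := Filter.map_neBot
    exact Filter.neBot_iff.1 (hmap.mono (le_inf hφh (Filter.le_principal_iff.2 himg)))
  · intro hq
    have key : ∀ ε : ℝ, 0 < ε → 0 ≤ q.2 - q.1 xb ∧ q.2 - q.1 xb ≤ ε := by
      intro ε hε
      have h1 : φ q ∈ closure (φ '' convexHull ℝ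
          {w : (X →L[ℝ] ℝ) × ℝ | ∃ t : T, b t - ε ≤ a t xb ∧ w = (a t, b t)}) :=
        hq ε (Set.mem_Ioi.2 hε)
      have hsub : convexHull ℝ {w : (X →L[ℝ] ℝ) × ℝ | ∃ t : T, b t - ε ≤ a t xb ∧ w = (a t, b t)}
          ⊆ {w : (X →L[ℝ] ℝ) × ℝ | 0 ≤ w.2 - w.1 xb} ∩ {w | w.2 - w.1 xb ≤ ε} := by
        refine convexHull_min ?_ ((convex_slack_ge xb 0).inter (convex_slack_le xb ε))
        rintro w ⟨t, ht, rfl⟩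
        exact ⟨sub_nonneg.2 (hxb t), show b t - (a t) xb ≤ ε by linarith⟩
      have hcl : closure (φ '' convexHull ℝ
          {w : (X →L[ℝ] ℝ) × ℝ | ∃ t : T, b t - ε ≤ a t xb ∧ w = (a t, b t)}) ⊆
          {z : WeakDual ℝ X × ℝ | 0 ≤ z.2 - z.1 xb ∧ z.2 - z.1 xb ≤ ε} := by
        refine closure_minimal ?_
          ((isClosed_le continuous_const hgcont).inter (isClosed_le hgcont continuous_const))
        rintro z ⟨w, hw, rfl⟩
        exact hsub hw
      exact hcl h1
    have heq : q.2 = q.1 xb := by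
      have h0' := (key 1 one_pos).1
      by_contra hne
      have hd : 0 < q.2 - q.1 xb := lt_of_le_of_ne h0' (by intro h; exact hne (by linarith))
      have := (key ((q.2 - q.1 xb)/2) (by linarith)).2
      linarith
    refine ⟨?_, heq⟩
    have h1 := hq 1 (Set.mem_Ioi.2 one_pos)
    have hsub1 : {w : (X →L[ℝ] ℝ) × ℝ | ∃ t : T, b t - 1 ≤ a t xb ∧ w = (a t, b t)}
        ⊆ {w : (X →L[ℝ] ℝ) × ℝ | ∃ t : T, w = (a t, b t)} := by
      rintro w ⟨t, _, rfl⟩; exact ⟨t, rfl⟩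
    have : φ q ∈ closure (φ '' C0) := by
      refine closure_mono (Set.image_mono ?_) h1
      rw [hC0]
      exact convexHull_mono hsub1
    exact this
end

section
/- Let (0, x̄) with x̄ ∈ F(0) be a local minimizer of φ over gph F, i.e., there is a neighborhood W of (0, x̄) in l_∞(T) × X such that φ(0, x̄) ≤ φ(p, x) for all (p, x) ∈ W with x ∈ F(p), where φ : l_∞(T) × X → ℝ ∪ {±∞} is finite at (0, x̄). Then every Fréchet upper subgradient (p*, x*) ∈ ∂̂⁺φ(0, x̄) satisfies −(p*, x*, ⟨x*, x̄⟩) ∈ cl* cone(⋃_{t∈T} ({−δ_t} × gph f_t*)) in l_∞(T)* × X* × ℝ. -/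
open Filter
open scoped ENNReal

namespace MyFM

noncomputable section

variable {X : Type*} [NormedAddCommGroup X] [NormedSpace ℝ X]


lemma le_conj (g : X → EReal) (u : X →L[ℝ] ℝ) (x : X) :
    (u x : EReal) - g x ≤ conj g u :=
  le_iSup (fun x => (u x : EReal) - g x) x

lemma conj_ne_bot {g : X → EReal} (hp : ErealProper g) (u : X →L[ℝ] ℝ) :
    conj g u ≠ ⊥ := by
  obtain ⟨x0, hx0⟩ := hp.2
  have hb := hp.1 x0
  have h1 : ((u x0 - (g x0).toReal : ℝ) : EReal) ≤ conj g u := by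
    have h := le_conj g u x0
    rwa [← EReal.coe_toReal hx0 hb, ← EReal.coe_sub] at h
  intro h
  rw [h, le_bot_iff] at h1
  exact EReal.coe_ne_bot _ h1

lemma conj_coe_of_le {g : X → EReal} (hp : ErealProper g) {u : X →L[ℝ] ℝ} {γ : ℝ}
    (h : conj g u ≤ (γ : EReal)) : ∃ c : ℝ, conj g u = (c : EReal) ∧ c ≤ γ := by
  have hnt : conj g u ≠ ⊤ := ne_top_of_le_ne_top (EReal.coe_ne_top γ) h
  refine ⟨(conj g u).toReal, (EReal.coe_toReal hnt (conj_ne_bot hp u)).symm, ?_⟩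
  rw [← EReal.coe_toReal hnt (conj_ne_bot hp u)] at h
  exact EReal.coe_le_coe_iff.1 h

lemma epi_sep {g : X → EReal} (hp : ErealProper g) (hl : LowerSemicontinuous g)
    (hc : ErealConvexOn g) {z : X} {a : ℝ} (hza : ¬ g z ≤ (a : EReal)) :
    ∃ (u0 : X →L[ℝ] ℝ) (s0 b : ℝ), s0 ≤ 0 ∧
      (∀ y (s : ℝ), g y ≤ (s : EReal) → u0 y + s0 * s < b) ∧ b < u0 z + s0 * a := by
  classical
  set epi : Set (X × ℝ) := {q | g q.1 ≤ ((q.2 : ℝ) : EReal)} with hepi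
  have hconv : Convex ℝ epi := by
    rintro q hq q' hq' α β hα hβ hab
    have h := hc q.1 q'.1 α β hα hβ hab
    have h2 : (α : EReal) * g q.1 + (β : EReal) * g q'.1
        ≤ (α : EReal) * ((q.2 : ℝ) : EReal) + (β : EReal) * ((q'.2 : ℝ) : EReal) :=
      add_le_add (mul_le_mul_of_nonneg_left hq (by exact_mod_cast hα))
        (mul_le_mul_of_nonneg_left hq' (by exact_mod_cast hβ))
    show g (α • q + β • q').1 ≤ (((α • q + β • q').2 : ℝ) : EReal)
    have hfst : (α • q + β • q').1 = α • q.1 + β • q'.1 := rfl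
    have hsnd : (α • q + β • q').2 = α * q.2 + β * q'.2 := rfl
    rw [hfst, hsnd]
    refine le_trans (le_trans h h2) ?_
    rw [← EReal.coe_mul, ← EReal.coe_mul, ← EReal.coe_add]
  have hclosed : IsClosed epi := by
    rw [← isOpen_compl_iff, isOpen_iff_mem_nhds]
    rintro q hq
    simp only [Set.mem_compl_iff, hepi, Set.mem_setOf_eq, not_le] at hq
    obtain ⟨c, hc1, hc2⟩ := EReal.exists_between_coe_real hq
    have hU : ∀ᶠ y in nhds q.1, (c : EReal) < g y := hl q.1 (c : EReal) hc2
    have hmem : {y : X | (c : EReal) < g y} ×ˢ Set.Iio c ∈ nhds q := by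
      rw [← @Prod.mk.eta _ _ q, nhds_prod_eq]
      exact Filter.prod_mem_prod hU (Iio_mem_nhds (EReal.coe_lt_coe_iff.1 hc1))
    refine Filter.mem_of_superset hmem ?_
    rintro ⟨y, s⟩ ⟨hy, hs⟩
    simp only [Set.mem_compl_iff, hepi, Set.mem_setOf_eq, not_le]
    exact lt_trans (EReal.coe_lt_coe_iff.2 hs) hy
  have hzmem : ((z, a) : X × ℝ) ∉ epi := hza
  obtain ⟨F, b, hFlt, hFb⟩ := geometric_hahn_banach_closed_point hconv hclosed hzmem
  set u0 : X →L[ℝ] ℝ := F.comp (ContinuousLinearMap.inl ℝ X ℝ) with hu0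
  set s0 : ℝ := F (0, 1) with hs0def
  have hF : ∀ (y : X) (s : ℝ), F (y, s) = u0 y + s0 * s := by
    intro y s
    have h1 : ((y, s) : X × ℝ) = (y, (0 : ℝ)) + s • ((0 : X), (1 : ℝ)) := by
      ext <;> simp
    rw [h1, map_add, map_smul]
    simp [hu0, hs0def, smul_eq_mul, mul_comm]
  obtain ⟨x0, hx0t⟩ := hp.2
  have hx0b := hp.1 x0
  set c0 : ℝ := (g x0).toReal with hc0
  have hgx0 : g x0 = (c0 : EReal) := (EReal.coe_toReal hx0t hx0b).symm
  have hmem : ∀ n : ℕ, u0 x0 + s0 * (c0 + n) < b := by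
    intro n
    rw [← hF]
    refine hFlt _ ?_
    show g x0 ≤ (((c0 + n : ℝ)) : EReal)
    rw [hgx0]
    exact EReal.coe_le_coe_iff.2 (by linarith [Nat.cast_nonneg (α := ℝ) n])
  have hs0 : s0 ≤ 0 := by
    by_contra hpos
    push_neg at hpos
    obtain ⟨n, hn⟩ := exists_nat_gt ((b - u0 x0 - s0 * c0) / s0)
    rw [div_lt_iff₀ hpos] at hn
    have h := hmem n
    nlinarith
  exact ⟨u0, s0, b, hs0, fun y s hys => by rw [← hF]; exact hFlt (y, s) hys,
    by rw [hF z a] at hFb; exact hFb⟩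


lemma inv_neg_expand {s0 : ℝ} (hs0' : s0 < 0) (r t : ℝ) :
    (-s0)⁻¹ * (r + s0 * t) = (-s0)⁻¹ * r - t := by
  have hne : s0 ≠ 0 := ne_of_lt hs0'
  have h : (-s0)⁻¹ * s0 = -1 := by
    rw [inv_neg, neg_mul, inv_mul_cancel₀ hne]
  rw [mul_add, ← mul_assoc, h]
  ring

lemma exists_conj_coe {g : X → EReal} (hp : ErealProper g) (hl : LowerSemicontinuous g)
    (hc : ErealConvexOn g) :
    ∃ (u : X →L[ℝ] ℝ) (c : ℝ), conj g u = (c : EReal) := by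
  obtain ⟨x0, hx0t⟩ := hp.2
  have hx0b := hp.1 x0
  set c0 : ℝ := (g x0).toReal with hc0
  have hgx0 : g x0 = (c0 : EReal) := (EReal.coe_toReal hx0t hx0b).symm
  have hza : ¬ g x0 ≤ ((c0 - 1 : ℝ) : EReal) := by
    rw [hgx0]
    intro h
    have := EReal.coe_le_coe_iff.1 h
    linarith
  obtain ⟨u0, s0, b, hs0, hsep, hb⟩ := epi_sep hp hl hc hza
  have hs0' : s0 < 0 := by
    rcases lt_or_eq_of_le hs0 with h | h
    · exact h
    · exfalso
      have h1 := hsep x0 c0 (le_of_eq hgx0)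
      rw [h] at h1 hb
      simp only [zero_mul, add_zero] at h1 hb
      linarith
  set m : ℝ := (-s0)⁻¹ with hmdef
  have hm : 0 < m := inv_pos.2 (neg_pos.2 hs0')
  have hms : m * s0 = -1 := by
    have hne : (-s0) ≠ 0 := ne_of_gt (neg_pos.2 hs0')
    rw [hmdef, inv_neg, neg_mul, inv_mul_cancel₀ (ne_of_lt hs0')]
  have hconjle : conj g (m • u0) ≤ ((m * b : ℝ) : EReal) := by
    refine iSup_le fun x => ?_
    by_cases hx : g x = ⊤
    · rw [hx, EReal.sub_top]; exact bot_le
    · have hxb := hp.1 x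
      have hgx : g x = ((g x).toReal : EReal) := (EReal.coe_toReal hx hxb).symm
      set β : ℝ := (g x).toReal
      have h1 := hsep x β (le_of_eq hgx)
      have h2 : (m • u0) x - β ≤ m * b := by
        have h3 := mul_lt_mul_of_pos_left h1 hm
        have h4 : (m • u0) x = m * u0 x := by simp [smul_eq_mul]
        rw [hmdef] at h3 ⊢
        rw [inv_neg_expand hs0' (u0 x) β] at h3
        rw [h4]
        linarith
      rw [hgx, ← EReal.coe_sub]
      exact EReal.coe_le_coe_iff.2 h2
  obtain ⟨c, hcc, _⟩ := conj_coe_of_le hp hconjle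
  exact ⟨m • u0, c, hcc⟩

/-- Fenchel–Moreau-type lemma. -/
lemma fm {g : X → EReal} (hp : ErealProper g) (hl : LowerSemicontinuous g)
    (hc : ErealConvexOn g) {z : X} {a : ℝ}
    (hz : ∀ (u : X →L[ℝ] ℝ) (c : ℝ), conj g u = (c : EReal) → u z - c ≤ a) :
    g z ≤ (a : EReal) := by
  by_contra hza
  obtain ⟨u0, s0, b, hs0, hsep, hb⟩ := epi_sep hp hl hc hza
  rcases lt_or_eq_of_le hs0 with hs0' | hs0'
  · -- s0 < 0
    set m : ℝ := (-s0)⁻¹ with hmdef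
    have hm : 0 < m := inv_pos.2 (neg_pos.2 hs0')
    have hms : m * s0 = -1 := by
      have hne : (-s0) ≠ 0 := ne_of_gt (neg_pos.2 hs0')
      rw [hmdef, inv_neg, neg_mul, inv_mul_cancel₀ (ne_of_lt hs0')]
    have hconjle : conj g (m • u0) ≤ ((m * b : ℝ) : EReal) := by
      refine iSup_le fun x => ?_
      by_cases hx : g x = ⊤
      · rw [hx, EReal.sub_top]; exact bot_le
      · have hxb := hp.1 x
        have hgx : g x = ((g x).toReal : EReal) := (EReal.coe_toReal hx hxb).symm
        set β : ℝ := (g x).toReal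
        have h1 := hsep x β (le_of_eq hgx)
        have h2 : (m • u0) x - β ≤ m * b := by
          have h3 := mul_lt_mul_of_pos_left h1 hm
          have h4 : (m • u0) x = m * u0 x := by simp [smul_eq_mul]
          rw [hmdef] at h3 ⊢
          rw [inv_neg_expand hs0' (u0 x) β] at h3
          rw [h4]
          linarith
        rw [hgx, ← EReal.coe_sub]
        exact EReal.coe_le_coe_iff.2 h2
    obtain ⟨c, hcc, hcγ⟩ := conj_coe_of_le hp hconjle
    have hvz := hz (m • u0) c hcc
    have h5 : (m • u0) z = m * u0 z := by simp [smul_eq_mul]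
    have h6 := mul_lt_mul_of_pos_left hb hm
    rw [hmdef] at h6 hcγ
    rw [inv_neg_expand hs0' (u0 z) a] at h6
    rw [h5, hmdef] at hvz
    linarith
  · -- s0 = 0
    rw [hs0'] at hsep hb
    simp only [zero_mul, add_zero] at hsep hb
    obtain ⟨v1, c1, hv1⟩ := exists_conj_coe hp hl hc
    have key : ∀ n : ℕ, (n : ℝ) * (u0 z - b) ≤ a + c1 - v1 z := by
      intro n
      set w : X →L[ℝ] ℝ := v1 + (n : ℝ) • u0 with hwdef
      have hwle : conj g w ≤ ((c1 + n * b : ℝ) : EReal) := by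
        refine iSup_le fun x => ?_
        by_cases hx : g x = ⊤
        · rw [hx, EReal.sub_top]; exact bot_le
        · have hxb := hp.1 x
          have hgx : g x = ((g x).toReal : EReal) := (EReal.coe_toReal hx hxb).symm
          set β : ℝ := (g x).toReal
          have h1 : v1 x - β ≤ c1 := by
            have h := le_conj g v1 x
            rw [hv1, hgx, ← EReal.coe_sub] at h
            exact EReal.coe_le_coe_iff.1 h
          have h2 : u0 x < b := hsep x β (le_of_eq hgx)
          have h3 : w x = v1 x + (n : ℝ) * u0 x := by simp [hwdef, smul_eq_mul]
          have h4 : w x - β ≤ c1 + n * b := by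
            have h5 : (n : ℝ) * u0 x ≤ (n : ℝ) * b :=
              mul_le_mul_of_nonneg_left h2.le (Nat.cast_nonneg n)
            rw [h3]; linarith
          rw [hgx, ← EReal.coe_sub]
          exact EReal.coe_le_coe_iff.2 h4
      obtain ⟨cn, hcn, hcnle⟩ := conj_coe_of_le hp hwle
      have h6 := hz w cn hcn
      have h7 : w z = v1 z + (n : ℝ) * u0 z := by simp [hwdef, smul_eq_mul]
      rw [h7] at h6
      nlinarith
    obtain ⟨n, hn⟩ := exists_nat_gt ((a + c1 - v1 z) / (u0 z - b))
    have hd : 0 < u0 z - b := by linarith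
    rw [div_lt_iff₀ hd] at hn
    have := key n
    nlinarith



variable {Y : Type*} [NormedAddCommGroup Y] [NormedSpace ℝ Y]

/-- Evaluation at `y` as a linear functional on the weak dual. -/
def evalLM (y : Y) : WeakDual ℝ Y →ₗ[ℝ] ℝ where
  toFun := fun φ => φ y
  map_add' := fun _ _ => rfl
  map_smul' := fun _ _ => rfl

lemma weakDual_eval (h : WeakDual ℝ Y →L[ℝ] ℝ) :
    ∃ y : Y, ∀ φ : WeakDual ℝ Y, h φ = φ y := by
  classical
  have hs : h ⁻¹' Metric.ball (0 : ℝ) 1 ∈ nhds (0 : WeakDual ℝ Y) := by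
    have := h.continuous.tendsto (0 : WeakDual ℝ Y)
    rw [map_zero] at this
    exact this (Metric.ball_mem_nhds 0 one_pos)
  rw [show nhds (0 : WeakDual ℝ Y) = Filter.comap (fun (x : WeakDual ℝ Y) (y : Y) => x y) (nhds ((fun (x : WeakDual ℝ Y) (y : Y) => x y) 0)) from nhds_induced _ _] at hs
  obtain ⟨t, ht, hts⟩ := Filter.mem_comap.1 hs
  have hzero : ((fun (x : WeakDual ℝ Y) (y : Y) => x y) 0) = (fun _ => (0 : ℝ)) := by
    ext y; rfl
  rw [hzero] at ht
  rw [nhds_pi] at ht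
  obtain ⟨I, hI, V, hV, hVt⟩ := Filter.mem_pi.1 ht
  have claim : ∀ φ : WeakDual ℝ Y, (∀ y ∈ I, φ y = 0) → h φ = 0 := by
    intro φ hφ
    by_contra hne
    have key : ∀ c : ℝ, c • φ ∈ h ⁻¹' Metric.ball (0 : ℝ) 1 := by
      intro c
      apply hts
      show (fun y => (topDualPairing ℝ Y) (c • φ) y) ∈ t
      apply hVt
      intro y hy
      show (topDualPairing ℝ Y) (c • φ) y ∈ V y
      have : (topDualPairing ℝ Y) (c • φ) y = c * φ y := rfl
      rw [this, hφ y hy, mul_zero]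
      exact mem_of_mem_nhds (hV y)
    have key2 := key ((h φ)⁻¹ * 2)
    simp only [Set.mem_preimage, Metric.mem_ball, dist_zero_right, map_smul, smul_eq_mul] at key2
    rw [inv_mul_eq_div] at key2
    have h2 : 2 / h φ * h φ = 2 := by field_simp
    rw [h2] at key2
    norm_num at key2
  let J : Finset Y := hI.toFinset
  let L : J → (WeakDual ℝ Y →ₗ[ℝ] ℝ) := fun j => evalLM (j : Y)
  have hker : ⨅ j : J, LinearMap.ker (L j) ≤ LinearMap.ker (h : WeakDual ℝ Y →ₗ[ℝ] ℝ) := by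
    intro φ hφ
    rw [Submodule.mem_iInf] at hφ
    have : ∀ y ∈ I, φ y = 0 := by
      intro y hy
      have := hφ ⟨y, hI.mem_toFinset.2 hy⟩
      exact this
    simpa [LinearMap.mem_ker] using claim φ this
  have hspan := mem_span_of_iInf_ker_le_ker hker
  obtain ⟨c, hc⟩ := (Submodule.mem_span_range_iff_exists_fun ℝ).1 hspan
  refine ⟨∑ j : J, c j • (j : Y), fun φ => ?_⟩
  have h1 : h φ = (∑ j : J, c j • L j) φ := by rw [hc]; rfl
  rw [h1, LinearMap.sum_apply]
  rw [map_sum φ (fun j : J => c j • (j : Y)) Finset.univ]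
  congr 1
  ext j
  rw [LinearMap.smul_apply, map_smul]
  rfl


section ConeHull

variable {V : Type*} [AddCommGroup V] [Module ℝ V]

lemma smul_mem_coneHull {S : Set V} {s : V} (hs : s ∈ S) {lam : ℝ} (hlam : 0 ≤ lam) :
    lam • s ∈ coneHull S :=
  ⟨lam, hlam, s, subset_convexHull ℝ S hs, rfl⟩

lemma zero_mem_coneHull {S : Set V} (hS : S.Nonempty) : (0 : V) ∈ coneHull S := by
  obtain ⟨s, hs⟩ := hS
  exact ⟨0, le_refl 0, s, subset_convexHull ℝ S hs, (zero_smul ℝ s).symm⟩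

lemma convex_coneHull (S : Set V) : Convex ℝ (coneHull S) := by
  rintro _ ⟨rx, hrx, yx, hyx, rfl⟩ _ ⟨ry, hry, yy, hyy, rfl⟩ α β hα hβ hab
  rcases eq_or_lt_of_le (by positivity : (0 : ℝ) ≤ α * rx + β * ry) with hρ | hρ
  · have h1 : α * rx = 0 := by nlinarith [mul_nonneg hα hrx, mul_nonneg hβ hry]
    have h2 : β * ry = 0 := by nlinarith [mul_nonneg hα hrx, mul_nonneg hβ hry]
    have h3 : α • rx • yx + β • ry • yy = 0 := by
      rw [smul_smul, smul_smul, h1, h2, zero_smul, zero_smul, add_zero]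
    rw [h3]
    exact ⟨0, le_refl 0, yx, hyx, (zero_smul ℝ yx).symm⟩
  · set ρ : ℝ := α * rx + β * ry with hρdef
    refine ⟨ρ, hρ.le, (α * rx / ρ) • yx + (β * ry / ρ) • yy, ?_, ?_⟩
    · refine convex_convexHull ℝ S hyx hyy (by positivity) (by positivity) ?_
      field_simp
      exact hρdef.symm
    · rw [smul_add, smul_smul, smul_smul, smul_smul, smul_smul]
      have hρne : ρ ≠ 0 := ne_of_gt hρ
      rw [mul_div_cancel₀ _ hρne, mul_div_cancel₀ _ hρne]

end ConeHull

instance weakDualLocallyConvex {Y : Type*} [NormedAddCommGroup Y] [NormedSpace ℝ Y] :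
    LocallyConvexSpace ℝ (WeakDual ℝ Y) :=
  WeakBilin.locallyConvexSpace (B := topDualPairing ℝ Y)

lemma ereal_real_of_le {v : EReal} (hb : v ≠ ⊥) {d : ℝ} (h : v ≤ (d : EReal)) :
    ∃ β : ℝ, v = (β : EReal) ∧ β ≤ d := by
  have hnt : v ≠ ⊤ := ne_top_of_le_ne_top (EReal.coe_ne_top d) h
  refine ⟨v.toReal, (EReal.coe_toReal hnt hb).symm, ?_⟩
  rw [← EReal.coe_toReal hnt hb] at h
  exact EReal.coe_le_coe_iff.1 h

end

end MyFM

set_option maxHeartbeats 1600000 in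
set_option synthInstance.maxHeartbeats 1000000 in
theorem stmt_8 {T : Type*} [Nonempty T]
    {X : Type*} [NormedAddCommGroup X] [NormedSpace ℝ X] [CompleteSpace X]
    (f : T → X → EReal)
    (hproper : ∀ t, ErealProper (f t))
    (hlsc : ∀ t, LowerSemicontinuous (f t))
    (hconv : ∀ t, ErealConvexOn (f t))
    (xb : X) (hxb : xb ∈ feas f 0)
    (φ : Linf T × X → EReal) (c : ℝ) (hfin : φ (0, xb) = (c : EReal))
    (hmin : ∃ W ∈ nhds ((0 : Linf T), xb), ∀ q ∈ W, q.2 ∈ feas f q.1 → φ (0, xb) ≤ φ q)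
    (ps : Linf T →L[ℝ] ℝ) (xs : X →L[ℝ] ℝ)
    (hup : ∀ ε : ℝ, 0 < ε → ∀ᶠ q : Linf T × X in nhds (0, xb),
      φ q ≤ ((c + ps q.1 + xs (q.2 - xb) + ε * ‖(q.1, q.2 - xb)‖ : ℝ) : EReal)) :
    (-ps, (-xs, -(xs xb))) ∈ wclosure3 (coneHull (⋃ t : T,
      ({-(dirac T t)} : Set (Linf T →L[ℝ] ℝ)) ×ˢ gphConj (f t))) := by
  classical
  by_contra hcon
  set S : Set ((Linf T →L[ℝ] ℝ) × ((X →L[ℝ] ℝ) × ℝ)) :=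
    ⋃ t : T, ({-(dirac T t)} : Set (Linf T →L[ℝ] ℝ)) ×ˢ gphConj (f t) with hSdef
  -- the embedding into the weak-star product space, as a linear map
  let emb : ((Linf T →L[ℝ] ℝ) × ((X →L[ℝ] ℝ) × ℝ)) →ₗ[ℝ]
      ((WeakDual ℝ (Linf T)) × ((WeakDual ℝ X) × ℝ)) :=
    { toFun := fun w =>
        ((StrongDual.toWeakDual w.1 : WeakDual ℝ (Linf T)),
          ((StrongDual.toWeakDual w.2.1 : WeakDual ℝ X), w.2.2))
      map_add' := fun _ _ => rfl
      map_smul' := fun _ _ => rfl }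
  have hcon' : emb (-ps, (-xs, -(xs xb))) ∉ closure (emb '' coneHull S) := hcon
  -- separation
  have hAconv : Convex ℝ (closure (emb '' coneHull S)) :=
    ((MyFM.convex_coneHull S).linear_image emb).closure
  obtain ⟨G, b, hGlt, hGw⟩ :=
    geometric_hahn_banach_closed_point hAconv isClosed_closure hcon'
  -- S is nonempty
  obtain ⟨u₀, c₀, hu₀⟩ :=
    MyFM.exists_conj_coe (hproper (Classical.arbitrary T)) (hlsc (Classical.arbitrary T))
      (hconv (Classical.arbitrary T))
  have hSne : S.Nonempty := by
    refine ⟨(-(dirac T (Classical.arbitrary T)), (u₀, c₀)), ?_⟩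
    rw [hSdef]
    exact Set.mem_iUnion.2 ⟨Classical.arbitrary T, Set.mem_prod.2 ⟨rfl, hu₀⟩⟩
  have hb0 : 0 < b := by
    have h0 : (0 : (WeakDual ℝ (Linf T)) × ((WeakDual ℝ X) × ℝ)) ∈ closure (emb '' coneHull S) := by
      apply subset_closure
      exact ⟨0, MyFM.zero_mem_coneHull hSne, map_zero emb⟩
    have := hGlt 0 h0
    rwa [map_zero] at this
  have hSle : ∀ s ∈ S, G (emb s) ≤ 0 := by
    intro s hs
    by_contra hpos
    push_neg at hpos
    have hlam : (0 : ℝ) ≤ (b + 1) / G (emb s) := div_nonneg (by linarith) hpos.le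
    have hmem : ((b + 1) / G (emb s)) • s ∈ coneHull S := MyFM.smul_mem_coneHull hs hlam
    have h2 := hGlt _ (subset_closure ⟨_, hmem, rfl⟩)
    rw [map_smul, map_smul, smul_eq_mul, div_mul_cancel₀ _ (ne_of_gt hpos)] at h2
    linarith
  -- representation of G by a point (p, x, r) of the predual
  obtain ⟨p, hp⟩ := MyFM.weakDual_eval (G.comp (ContinuousLinearMap.inl ℝ
    (WeakDual ℝ (Linf T)) ((WeakDual ℝ X) × ℝ)))
  obtain ⟨x, hx⟩ := MyFM.weakDual_eval (G.comp ((ContinuousLinearMap.inr ℝ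
    (WeakDual ℝ (Linf T)) ((WeakDual ℝ X) × ℝ)).comp
      (ContinuousLinearMap.inl ℝ (WeakDual ℝ X) ℝ)))
  set r : ℝ := G (0, (0, 1)) with hrdef
  have hG1 : ∀ φ : WeakDual ℝ (Linf T), G (φ, (0, 0)) = φ p := by
    intro φ
    have := hp φ
    simp only [ContinuousLinearMap.comp_apply, ContinuousLinearMap.inl_apply] at this
    exact this
  have hG2 : ∀ ψ : WeakDual ℝ X, G ((0 : WeakDual ℝ (Linf T)), (ψ, 0)) = ψ x := by
    intro ψ
    simpa [ContinuousLinearMap.comp_apply, ContinuousLinearMap.inl_apply,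
      ContinuousLinearMap.inr_apply] using hx ψ
  have hG3 : ∀ s : ℝ, G ((0 : WeakDual ℝ (Linf T)), ((0 : WeakDual ℝ X), s)) = s * r := by
    intro s
    have h1 : ((0 : WeakDual ℝ (Linf T)), ((0 : WeakDual ℝ X), s))
        = s • ((0 : WeakDual ℝ (Linf T)), ((0 : WeakDual ℝ X), (1 : ℝ))) := by
      simp [Prod.smul_mk, smul_eq_mul]
    rw [h1, map_smul, smul_eq_mul, hrdef]
  have hGdecomp : ∀ z : (WeakDual ℝ (Linf T)) × ((WeakDual ℝ X) × ℝ), G z = z.1 p + z.2.1 x + z.2.2 * r := by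
    rintro ⟨z1, z2, z3⟩
    have hz : ((z1, (z2, z3)) : (WeakDual ℝ (Linf T)) × ((WeakDual ℝ X) × ℝ))
        = (z1, (0, 0)) + (0, (z2, 0)) + (0, (0, z3)) := by
      simp [Prod.ext_iff]
    show G (z1, (z2, z3)) = z1 p + z2 x + z3 * r
    conv_lhs => rw [hz]
    rw [map_add, map_add, hG1, hG2, hG3]
  -- Key conditions from the separation
  have hembApp : ∀ (ξ : Linf T →L[ℝ] ℝ) (η : X →L[ℝ] ℝ) (s3 : ℝ),
      G (emb (ξ, (η, s3))) = ξ p + η x + s3 * r := by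
    intro ξ η s3
    rw [hGdecomp]
    rfl
  have hC : ∀ (t : T) (u : X →L[ℝ] ℝ) (c : ℝ), conj (f t) u = (c : EReal) →
      u x + c * r ≤ p t := by
    intro t u c hcz
    have hmem : (-(dirac T t), (u, c)) ∈ S := by
      rw [hSdef]
      exact Set.mem_iUnion.2 ⟨t, Set.mem_prod.2 ⟨rfl, hcz⟩⟩
    have h1 := hSle _ hmem
    rw [hembApp] at h1
    have h2 : (-(dirac T t)) p = -(p t) := by
      rw [ContinuousLinearMap.neg_apply]
      rfl
    rw [h2] at h1
    linarith
  have hD : ps p + xs x + r * xs xb < 0 := by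
    have h1 := lt_trans hb0 hGw
    rw [hembApp] at h1
    rw [ContinuousLinearMap.neg_apply, ContinuousLinearMap.neg_apply] at h1
    linarith
  -- the first-order inequality from local optimality and the upper subgradient
  have star : ∀ ε : ℝ, 0 < ε → ∀ᶠ q : Linf T × X in nhds ((0 : Linf T), xb),
      q.2 ∈ feas f q.1 → 0 ≤ ps q.1 + xs (q.2 - xb) + ε * ‖(q.1, q.2 - xb)‖ := by
    intro ε hε
    obtain ⟨W, hW, hWmin⟩ := hmin
    filter_upwards [hup ε hε, hW] with q h1 h2 hfeas
    have h3 := hWmin q h2 hfeas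
    rw [hfin] at h3
    have h4 := EReal.coe_le_coe_iff.1 (le_trans h3 h1)
    linarith
  -- feasible curves give tangential nonnegativity
  have curve : ∀ (P : Linf T) (V : X),
      (∀ lam : ℝ, 0 < lam → lam ≤ 1 → (xb + lam • V) ∈ feas f (lam • P)) →
      0 ≤ ps P + xs V := by
    intro P V hfe
    have inner : ∀ ε : ℝ, 0 < ε → 0 ≤ ps P + xs V + ε * ‖((P, V) : Linf T × X)‖ := by
      intro ε hε
      have htend : Filter.Tendsto (fun lam : ℝ => (((lam • P : Linf T), xb + lam • V)))
          (nhdsWithin 0 (Set.Ioi 0)) (nhds ((0 : Linf T), xb)) := by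
        have hc1 : Filter.Tendsto (fun lam : ℝ => (lam • P : Linf T)) (nhds 0)
            (nhds (0 : Linf T)) := by
          have hid : Filter.Tendsto (fun lam : ℝ => lam) (nhds 0) (nhds 0) :=
            Filter.tendsto_id
          simpa using hid.smul_const P
        have hc2 : Filter.Tendsto (fun lam : ℝ => xb + lam • V) (nhds 0) (nhds xb) := by
          have hid : Filter.Tendsto (fun lam : ℝ => lam) (nhds 0) (nhds 0) :=
            Filter.tendsto_id
          simpa using tendsto_const_nhds.add (hid.smul_const V)
        have h12 : Filter.Tendsto (fun lam : ℝ => (((lam • P : Linf T), xb + lam • V)))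
            (nhds 0) (nhds ((0 : Linf T), xb)) := by
          rw [nhds_prod_eq]
          exact hc1.prodMk hc2
        exact h12.mono_left nhdsWithin_le_nhds
      have hev := htend.eventually (star ε hε)
      have h01 : Set.Ioo (0 : ℝ) 1 ∈ nhdsWithin 0 (Set.Ioi 0) :=
        Ioo_mem_nhdsGT_of_mem (by norm_num : (0 : ℝ) ∈ Set.Ico (0 : ℝ) 1)
      obtain ⟨lam, hq, hlam⟩ := (hev.and h01).exists
      obtain ⟨h0, h1⟩ := hlam
      have hfeas := hfe lam h0 h1.le
      have hineq := hq hfeas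
      simp only [add_sub_cancel_left] at hineq
      have hnorm : (((lam • P : Linf T), lam • V) : Linf T × X)
          = lam • ((P, V) : Linf T × X) := rfl
      rw [hnorm, norm_smul, Real.norm_eq_abs, abs_of_pos h0, map_smul, map_smul,
        smul_eq_mul, smul_eq_mul] at hineq
      have hq2 : 0 ≤ lam * (ps P + xs V + ε * ‖((P, V) : Linf T × X)‖) := by
        ring_nf
        ring_nf at hineq
        linarith
      have h' : lam * 0 ≤ lam * (ps P + xs V + ε * ‖((P, V) : Linf T × X)‖) := by
        rwa [mul_zero]
      exact le_of_mul_le_mul_left h' h0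
    refine le_of_forall_pos_le_add ?_
    intro ε' hε'
    have hN : (0 : ℝ) ≤ ‖((P, V) : Linf T × X)‖ := norm_nonneg _
    have hδ : 0 < ε' / (‖((P, V) : Linf T × X)‖ + 1) := by positivity
    have hmain := inner _ hδ
    have hle : ε' / (‖((P, V) : Linf T × X)‖ + 1) * ‖((P, V) : Linf T × X)‖ ≤ ε' := by
      rw [div_mul_eq_mul_div, div_le_iff₀ (by linarith)]
      nlinarith
    linarith
  -- case analysis on r
  rcases le_or_gt 0 r with hr | hr
  · -- r ≥ 0 : use the direction x' = x + r • xb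
    have hfeasall : ∀ lam : ℝ, 0 < lam → lam ≤ 1 →
        (xb + lam • (x + r • xb)) ∈ feas f (lam • p) := by
      intro lam h0 h1 t
      show f t (xb + lam • (x + r • xb)) ≤ (((lam • p : Linf T) t : ℝ) : EReal)
      have hcoef : (lam • p : Linf T) t = lam * p t := by
        rw [lp.coeFn_smul]
        rfl
      rw [hcoef]
      apply MyFM.fm (hproper t) (hlsc t) (hconv t)
      intro u c hcz
      have hxb0 : f t xb ≤ ((0 : ℝ) : EReal) := by
        have := hxb t
        simpa using this
      obtain ⟨β, hβeq, hβle⟩ := MyFM.ereal_real_of_le ((hproper t).1 xb) hxb0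
      have hyoung : u xb ≤ c := by
        have h5 := MyFM.le_conj (f t) u xb
        rw [hcz, hβeq, ← EReal.coe_sub] at h5
        have := EReal.coe_le_coe_iff.1 h5
        linarith
      have hCtc := hC t u c hcz
      have hux' : u (x + r • xb) ≤ p t := by
        rw [map_add, map_smul, smul_eq_mul]
        nlinarith [mul_le_mul_of_nonneg_left hyoung hr]
      rw [map_add, map_smul, smul_eq_mul]
      nlinarith [mul_le_mul_of_nonneg_left hux' h0.le]
    have hcurve := curve p (x + r • xb) hfeasall
    rw [map_add, map_smul, smul_eq_mul] at hcurve
    linarith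
  · -- r < 0
    set mu : ℝ := -r with hmudef
    have hmu : 0 < mu := by rw [hmudef]; linarith
    have hmune : mu ≠ 0 := ne_of_gt hmu
    have hinv : mu⁻¹ * mu = 1 := inv_mul_cancel₀ hmune
    have hfeasxt : ∀ t : T, f t (mu⁻¹ • x) ≤ ((mu⁻¹ * p t : ℝ) : EReal) := by
      intro t
      apply MyFM.fm (hproper t) (hlsc t) (hconv t)
      intro u c hcz
      have hCtc := hC t u c hcz
      have h2 : u x - mu * c ≤ p t := by
        have : c * r = -(mu * c) := by rw [hmudef]; ring
        linarith [hCtc, this.symm.le]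
      have h3 := mul_le_mul_of_nonneg_left h2 (inv_pos.2 hmu).le
      rw [map_smul, smul_eq_mul]
      have hexp : mu⁻¹ * (u x - mu * c) = mu⁻¹ * u x - c := by
        rw [mul_sub, ← mul_assoc, hinv, one_mul]
      rw [hexp] at h3
      linarith
    have hfeasall : ∀ lam : ℝ, 0 < lam → lam ≤ 1 →
        (xb + lam • ((mu⁻¹ • x) - xb)) ∈ feas f (lam • (mu⁻¹ • p)) := by
      intro lam h0 h1 t
      show f t (xb + lam • ((mu⁻¹ • x) - xb)) ≤ (((lam • (mu⁻¹ • p) : Linf T) t : ℝ) : EReal)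
      have hcoef : (lam • (mu⁻¹ • p) : Linf T) t = lam * (mu⁻¹ * p t) := by
        rw [lp.coeFn_smul]
        show lam * ((mu⁻¹ • p : Linf T) t) = _
        rw [lp.coeFn_smul]
        rfl
      rw [hcoef]
      have hcomb : xb + lam • ((mu⁻¹ • x) - xb) = (1 - lam) • xb + lam • (mu⁻¹ • x) := by
        rw [smul_sub, sub_smul, one_smul]
        abel
      rw [hcomb]
      have h3 := hconv t xb (mu⁻¹ • x) (1 - lam) lam (by linarith) h0.le (by ring)
      have hxb0 : f t xb ≤ ((0 : ℝ) : EReal) := by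
        have := hxb t
        simpa using this
      obtain ⟨β, hβeq, hβle⟩ := MyFM.ereal_real_of_le ((hproper t).1 xb) hxb0
      obtain ⟨γ, hγeq, hγle⟩ := MyFM.ereal_real_of_le ((hproper t).1 (mu⁻¹ • x)) (hfeasxt t)
      rw [hβeq, hγeq, ← EReal.coe_mul, ← EReal.coe_mul, ← EReal.coe_add] at h3
      refine le_trans h3 (EReal.coe_le_coe_iff.2 ?_)
      nlinarith [mul_le_mul_of_nonneg_left hγle h0.le]
    have hcurve := curve (mu⁻¹ • p) ((mu⁻¹ • x) - xb) hfeasall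
    rw [map_smul, map_sub, map_smul, smul_eq_mul, smul_eq_mul] at hcurve
    have hfin2 : 0 ≤ ps p + xs x - mu * xs xb := by
      have := mul_le_mul_of_nonneg_left hcurve hmu.le
      rw [mul_zero] at this
      have hexp : mu * (mu⁻¹ * ps p + (mu⁻¹ * xs x - xs xb))
          = ps p + xs x - mu * xs xb := by
        field_simp
        ring
      rw [hexp] at this
      linarith
    rw [hmudef] at hfin2
    linarith
end

section
/- Let (0, x̄) with x̄ ∈ F(0) be a local minimizer of φ over gph F, i.e., there is a neighborhood W of (0, x̄) in l_∞(T) × X such that φ(0, x̄) ≤ φ(p, x) for all (p, x) ∈ W with x ∈ F(p). If φ : l_∞(T) × X → ℝ is Fréchet differentiable at (0, x̄) with partial derivatives ∇_p φ(0, x̄) ∈ l_∞(T)* and ∇_x φ(0, x̄) ∈ X*, then −(∇_p φ(0, x̄), ∇_x φ(0, x̄), ⟨∇_x φ(0, x̄), x̄⟩) ∈ cl* cone(⋃_{t∈T} ({−δ_t} × gph f_t*)) in l_∞(T)* × X* × ℝ. -/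
open Filter
open scoped ENNReal

noncomputable section AuxProof

open Filter

lemma weakdual_clm_exists_pred {E : Type*} [NormedAddCommGroup E] [NormedSpace ℝ E]
    (g : WeakDual ℝ E →L[ℝ] ℝ) : ∃ p : E, ∀ u : WeakDual ℝ E, g u = u p := by
  classical
  -- continuity at 0
  have h0 : {y : ℝ | |y| < 1} ∈ nhds (g 0) := by
    rw [map_zero]
    exact IsOpen.mem_nhds (isOpen_Iio.preimage continuous_abs) (by simp)
  have hc : {u : WeakDual ℝ E | |g u| < 1} ∈ nhds (0 : WeakDual ℝ E) :=
    g.continuous.continuousAt.preimage_mem_nhds h0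
  -- unfold induced topology
  rw [show nhds (0 : WeakDual ℝ E) = _ from nhds_induced _ _] at hc
  obtain ⟨s, hs, hsub⟩ := hc
  have hzero : (fun y : E => (topDualPairing ℝ E) (0 : WeakDual ℝ E) y) = fun _ => (0:ℝ) := by
    ext y; rfl
  rw [hzero, nhds_pi] at hs
  obtain ⟨I, hIfin, V, hV, hVsub⟩ := Filter.mem_pi.1 hs
  -- vanishing on I implies in ker g
  have hker : ∀ u : WeakDual ℝ E, (∀ y ∈ I, u y = 0) → g u = 0 := by
    intro u hu
    by_contra hne
    set c : ℝ := 2 / |g u| with hc'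
    have hgu : 0 < |g u| := abs_pos.2 hne
    have hmem : (fun y : E => (topDualPairing ℝ E) (c • u) y) ∈ Set.pi I V := by
      intro y hy
      have h1 : (topDualPairing ℝ E) (c • u) y = 0 := by
        have : ((topDualPairing ℝ E) u) y = 0 := hu y hy
        change c * ((topDualPairing ℝ E) u) y = 0
        rw [this, mul_zero]
      show (topDualPairing ℝ E) (c • u) y ∈ V y
      rw [h1]; exact mem_of_mem_nhds (hV y)
    have := hsub (hVsub hmem)
    simp only [Set.mem_setOf_eq, map_smul, smul_eq_mul, abs_mul] at this
    rw [hc', abs_div] at this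
    have h2 : (2:ℝ) / |g u| * |g u| = 2 := div_mul_cancel₀ 2 (ne_of_gt hgu)
    simp only [abs_abs] at this
    rw [abs_of_nonneg (by positivity : (0:ℝ) ≤ (2:ℝ))] at this
    linarith [this, h2]
  -- linear algebra
  haveI : Finite I := hIfin.to_subtype
  let L : I → WeakDual ℝ E →ₗ[ℝ] ℝ := fun y => (topDualPairing ℝ E).flip y.1
  have hKer : (⨅ i : I, LinearMap.ker (L i)) ≤ LinearMap.ker (g : WeakDual ℝ E →ₗ[ℝ] ℝ) := by
    intro u hu
    simp only [Submodule.mem_iInf, LinearMap.mem_ker] at hu ⊢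
    exact hker u (fun y hy => hu ⟨y, hy⟩)
  have hspan := mem_span_of_iInf_ker_le_ker hKer
  haveI : Fintype I := hIfin.fintype
  obtain ⟨cf, hcf⟩ := (Submodule.mem_span_range_iff_exists_fun ℝ).1 hspan
  refine ⟨∑ i : I, cf i • (i : E), fun u => ?_⟩
  have h2 := LinearMap.congr_fun hcf u
  simp only [LinearMap.coe_sum, Finset.sum_apply, LinearMap.smul_apply] at h2
  rw [show g u = (g : WeakDual ℝ E →ₗ[ℝ] ℝ) u from rfl, ← h2]
  rw [map_sum]
  refine Finset.sum_congr rfl (fun i _ => ?_)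
  rw [map_smul]
  rfl



section FenchelAux
variable {Y : Type*} [NormedAddCommGroup Y] [NormedSpace ℝ Y]

lemma le_conj (g : Y → EReal) (u : Y →L[ℝ] ℝ) (x : Y) : (u x : EReal) - g x ≤ conj g u :=
  le_iSup (fun x => (u x : EReal) - g x) x

lemma conj_le_coe {g : Y → EReal} {u : Y →L[ℝ] ℝ} {β : ℝ} (hbot : ∀ y, g y ≠ ⊥)
    (h : ∀ y, g y ≠ ⊤ → u y - (g y).toReal ≤ β) : conj g u ≤ (β : EReal) := by
  refine iSup_le fun y => ?_
  by_cases hy : g y = ⊤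
  · rw [hy, EReal.sub_top]; exact bot_le
  · rw [← EReal.coe_toReal hy (hbot y), ← EReal.coe_sub]
    exact_mod_cast h y hy

lemma conj_ne_bot {g : Y → EReal} (hp : ErealProper g) (u : Y →L[ℝ] ℝ) : conj g u ≠ ⊥ := by
  obtain ⟨x1, hx1⟩ := hp.2
  intro h
  have h1 := le_conj g u x1
  rw [h, ← EReal.coe_toReal hx1 (hp.1 x1), ← EReal.coe_sub, le_bot_iff] at h1
  exact EReal.coe_ne_bot _ h1

lemma conj_eq_coe {g : Y → EReal} (hp : ErealProper g) {u : Y →L[ℝ] ℝ} (hu : u ∈ domConj g) :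
    conj g u = ((conj g u).toReal : EReal) :=
  (EReal.coe_toReal (ne_of_lt hu) (conj_ne_bot hp u)).symm

lemma fenchel_young {g : Y → EReal} (hp : ErealProper g) {u : Y →L[ℝ] ℝ} (hu : u ∈ domConj g)
    {y : Y} (hy : g y ≠ ⊤) : u y - (g y).toReal ≤ (conj g u).toReal := by
  have h1 := le_conj g u y
  rw [← EReal.coe_toReal hy (hp.1 y), ← EReal.coe_sub, conj_eq_coe hp hu] at h1
  exact_mod_cast h1

lemma epi_sep {g : Y → EReal} (hp : ErealProper g) (hl : LowerSemicontinuous g)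
    (hc : ErealConvexOn g) {z : Y} {c : ℝ} (hzc : (c : EReal) < g z) :
    ∃ (ψ : Y →L[ℝ] ℝ) (c0 u0 : ℝ), 0 ≤ c0 ∧ ψ z + c0 * c < u0 ∧
      ∀ y : Y, ∀ γ : ℝ, g y ≤ (γ : EReal) → u0 < ψ y + c0 * γ := by
  classical
  set epi : Set (Y × ℝ) := {q | g q.1 ≤ (q.2 : EReal)} with hepi
  -- closed
  have hclosed : IsClosed epi := by
    rw [← isOpen_compl_iff, isOpen_iff_mem_nhds]
    rintro ⟨y, γ⟩ hq
    simp only [Set.mem_compl_iff, hepi, Set.mem_setOf_eq, not_le] at hq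
    -- pick real m with γ < m < g y
    obtain ⟨m, hm1, hm2⟩ : ∃ m : ℝ, (γ : EReal) < m ∧ (m : EReal) < g y := by
      by_cases ht : g y = ⊤
      · exact ⟨γ + 1, by exact_mod_cast (lt_add_one γ), by rw [ht]; exact EReal.coe_lt_top _⟩
      · have hb : g y ≠ ⊥ := hp.1 y
        refine ⟨(γ + (g y).toReal) / 2, ?_, ?_⟩
        · have : γ < (g y).toReal := by
            have := hq
            rw [← EReal.coe_toReal ht hb] at this
            exact_mod_cast this
          exact_mod_cast (by linarith : γ < (γ + (g y).toReal) / 2)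
        · rw [← EReal.coe_toReal ht hb]
          have : γ < (g y).toReal := by
            have := hq
            rw [← EReal.coe_toReal ht hb] at this
            exact_mod_cast this
          exact_mod_cast (by linarith : (γ + (g y).toReal) / 2 < (g y).toReal)
    have h1 : ∀ᶠ y' in nhds y, (m : EReal) < g y' := hl y m hm2
    have hγm : γ < m := by exact_mod_cast hm1
    have h2 : ∀ᶠ γ' in nhds γ, γ' < m :=
      (isOpen_Iio.eventually_mem hγm).mono fun x hx => Set.mem_Iio.1 hx
    rw [nhds_prod_eq]
    filter_upwards [Filter.Eventually.prod_mk h1 h2] with q hq'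
    simp only [Set.mem_compl_iff, hepi, Set.mem_setOf_eq, not_le]
    calc (q.2 : EReal) < m := by exact_mod_cast hq'.2
      _ < g q.1 := hq'.1
  -- convex
  have hconvex : Convex ℝ epi := by
    rintro ⟨y1, γ1⟩ hq1 ⟨y2, γ2⟩ hq2 a b ha hb hab
    simp only [hepi, Set.mem_setOf_eq] at hq1 hq2
    have ht1 : g y1 ≠ ⊤ := fun h => by
      rw [h] at hq1; exact (not_le.2 (EReal.coe_lt_top γ1)) hq1
    have ht2 : g y2 ≠ ⊤ := fun h => by
      rw [h] at hq2; exact (not_le.2 (EReal.coe_lt_top γ2)) hq2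
    have hr1 : (g y1).toReal ≤ γ1 := by
      rw [← EReal.coe_toReal ht1 (hp.1 y1)] at hq1; exact_mod_cast hq1
    have hr2 : (g y2).toReal ≤ γ2 := by
      rw [← EReal.coe_toReal ht2 (hp.1 y2)] at hq2; exact_mod_cast hq2
    show g (a • y1 + b • y2) ≤ (((a • (y1, γ1) + b • (y2, γ2) : Y × ℝ)).2 : EReal)
    have hsnd : ((a • (y1, γ1) + b • (y2, γ2) : Y × ℝ)).2 = a * γ1 + b * γ2 := rfl
    rw [hsnd]
    refine le_trans (hc y1 y2 a b ha hb hab) ?_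
    rw [← EReal.coe_toReal ht1 (hp.1 y1), ← EReal.coe_toReal ht2 (hp.1 y2),
      ← EReal.coe_mul, ← EReal.coe_mul, ← EReal.coe_add]
    have : a * (g y1).toReal + b * (g y2).toReal ≤ a * γ1 + b * γ2 := by
      have := mul_le_mul_of_nonneg_left hr1 ha
      have := mul_le_mul_of_nonneg_left hr2 hb
      linarith
    exact_mod_cast this
  -- point not in epi
  have hnot : ((z, c) : Y × ℝ) ∉ epi := by
    simp only [hepi, Set.mem_setOf_eq, not_le]
    exact hzc
  obtain ⟨Φ, u0, hΦz, hΦepi⟩ := geometric_hahn_banach_point_closed hconvex hclosed hnot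
  set ψ : Y →L[ℝ] ℝ := Φ.comp (ContinuousLinearMap.inl ℝ Y ℝ) with hψ
  set c0 : ℝ := Φ ((0 : Y), (1 : ℝ)) with hc0
  have hdecomp : ∀ (yy : Y) (γ : ℝ), Φ (yy, γ) = ψ yy + c0 * γ := by
    intro yy γ
    have h1 : ((yy, γ) : Y × ℝ) = ((yy, 0) : Y × ℝ) + γ • (((0 : Y), (1 : ℝ)) : Y × ℝ) := by
      simp [Prod.ext_iff]
    rw [h1, map_add, map_smul]
    simp only [smul_eq_mul, hψ, ContinuousLinearMap.comp_apply, ContinuousLinearMap.inl_apply]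
    ring
  obtain ⟨x1, hx1⟩ := hp.2
  have hmem1 : ∀ γ : ℝ, (g x1).toReal ≤ γ → ((x1, γ) : Y × ℝ) ∈ epi := by
    intro γ hγ
    show g x1 ≤ (γ : EReal)
    rw [← EReal.coe_toReal hx1 (hp.1 x1)]
    exact_mod_cast hγ
  have h0 : 0 ≤ c0 := by
    by_contra h
    push_neg at h
    set γ : ℝ := max ((g x1).toReal) ((u0 - ψ x1) / c0) with hγ
    have h1 := hΦepi _ (hmem1 γ (le_max_left _ _))
    rw [hdecomp] at h1
    have h2 : c0 * γ ≤ c0 * ((u0 - ψ x1) / c0) :=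
      mul_le_mul_of_nonpos_left (le_max_right _ _) (le_of_lt h)
    have h3 : c0 * ((u0 - ψ x1) / c0) = u0 - ψ x1 := by
      rw [mul_comm, div_mul_cancel₀ _ (ne_of_lt h)]
    linarith
  refine ⟨ψ, c0, u0, h0, ?_, ?_⟩
  · rw [← hdecomp]; exact hΦz
  · intro y γ hgy
    rw [← hdecomp]
    exact hΦepi (y, γ) hgy

lemma conj_bound_aux {g : Y → EReal} (hp : ErealProper g) {ψ : Y →L[ℝ] ℝ} {c0 u0 : ℝ}
    (hc0 : 0 < c0) (hepi : ∀ y : Y, ∀ γ : ℝ, g y ≤ (γ : EReal) → u0 < ψ y + c0 * γ) :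
    conj g ((-(c0⁻¹)) • ψ) ≤ ((-u0 / c0 : ℝ) : EReal) := by
  apply conj_le_coe hp.1
  intro y hy
  have h1 := hepi y ((g y).toReal) (le_of_eq (EReal.coe_toReal hy (hp.1 y)).symm)
  have h2 : ((-(c0⁻¹)) • ψ) y = -(c0⁻¹) * ψ y := rfl
  rw [h2]
  have h3 : -(c0⁻¹) * ψ y - (g y).toReal = (-ψ y - c0 * (g y).toReal) / c0 := by
    field_simp
  rw [h3]
  have key : -ψ y - c0 * (g y).toReal ≤ -u0 := by linarith
  gcongr

lemma exists_minorant {g : Y → EReal} (hp : ErealProper g) (hl : LowerSemicontinuous g)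
    (hc : ErealConvexOn g) : ∃ u : Y →L[ℝ] ℝ, u ∈ domConj g := by
  obtain ⟨x1, hx1⟩ := hp.2
  have hzc : ((((g x1).toReal) - 1 : ℝ) : EReal) < g x1 := by
    conv_rhs => rw [← EReal.coe_toReal hx1 (hp.1 x1)]
    exact_mod_cast sub_one_lt _
  obtain ⟨ψ, c0, u0, h0, hz, hepi⟩ := epi_sep hp hl hc hzc
  have hc0pos : 0 < c0 := by
    rcases lt_or_eq_of_le h0 with h | h
    · exact h
    · exfalso
      have h1 := hepi x1 ((g x1).toReal) (le_of_eq (EReal.coe_toReal hx1 (hp.1 x1)).symm)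
      rw [← h] at hz h1
      rw [zero_mul, add_zero] at hz h1
      linarith
  refine ⟨(-(c0⁻¹)) • ψ, ?_⟩
  exact lt_of_le_of_lt (conj_bound_aux hp hc0pos hepi) (EReal.coe_lt_top _)

lemma le_of_forall_dom {g : Y → EReal} (hp : ErealProper g) (hl : LowerSemicontinuous g)
    (hc : ErealConvexOn g) {z : Y} {c : ℝ}
    (h : ∀ u ∈ domConj g, u z - (conj g u).toReal ≤ c) : g z ≤ (c : EReal) := by
  by_contra hcon
  push_neg at hcon
  obtain ⟨ψ, c0, u0, h0, hz, hepi⟩ := epi_sep hp hl hc hcon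
  rcases lt_or_eq_of_le h0 with hc0 | hc0
  · -- c0 > 0
    set u : Y →L[ℝ] ℝ := (-(c0⁻¹)) • ψ with hu
    have hb : conj g u ≤ ((-u0 / c0 : ℝ) : EReal) := conj_bound_aux hp hc0 hepi
    have hdom : u ∈ domConj g := lt_of_le_of_lt hb (EReal.coe_lt_top _)
    have h1 := h u hdom
    have h2 : (conj g u).toReal ≤ -u0 / c0 := by
      have := hb
      rw [conj_eq_coe hp hdom] at this
      exact_mod_cast this
    have h3 : u z = -(c0⁻¹) * ψ z := rfl
    have h4 : c < (u0 - ψ z) / c0 := (lt_div_iff₀ hc0).2 (by linarith)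
    have h5 : (u0 - ψ z) / c0 = -(c0⁻¹) * ψ z + u0 / c0 := by
      field_simp
      ring
    have h6 : -u0 / c0 = -(u0 / c0) := by ring
    linarith [h1, h2, h3 ▸ h1]
  · -- c0 = 0
    rw [← hc0, zero_mul, add_zero] at hz
    have hepi' : ∀ y : Y, g y ≠ ⊤ → u0 < ψ y := by
      intro y hy
      have := hepi y ((g y).toReal) (le_of_eq (EReal.coe_toReal hy (hp.1 y)).symm)
      rw [← hc0, zero_mul, add_zero] at this
      exact this
    obtain ⟨v, hv⟩ := exists_minorant hp hl hc
    set βv : ℝ := (conj g v).toReal with hβv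
    have hd : 0 < u0 - ψ z := by linarith
    set lam : ℝ := max 0 ((c - (v z - βv) + 1) / (u0 - ψ z)) with hlam
    have hlam0 : 0 ≤ lam := le_max_left _ _
    have hlambig : c < (v z - βv) + lam * (u0 - ψ z) := by
      have h1 : (c - (v z - βv) + 1) / (u0 - ψ z) ≤ lam := le_max_right _ _
      have h2 : c - (v z - βv) + 1 ≤ lam * (u0 - ψ z) := (div_le_iff₀ hd).1 h1
      linarith
    set u : Y →L[ℝ] ℝ := v - lam • ψ with hu
    have hb : conj g u ≤ ((βv - lam * u0 : ℝ) : EReal) := by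
      apply conj_le_coe hp.1
      intro y hy
      have h1 : v y - (g y).toReal ≤ βv := fenchel_young hp hv hy
      have h2 : u0 ≤ ψ y := le_of_lt (hepi' y hy)
      have h3 : u y = v y - lam * ψ y := rfl
      rw [h3]
      nlinarith [mul_le_mul_of_nonneg_left h2 hlam0]
    have hdom : u ∈ domConj g := lt_of_le_of_lt hb (EReal.coe_lt_top _)
    have h1 := h u hdom
    have h2 : (conj g u).toReal ≤ βv - lam * u0 := by
      have := hb
      rw [conj_eq_coe hp hdom] at this
      exact_mod_cast this
    have h3 : u z = v z - lam * ψ z := rfl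
    rw [h3] at h1
    nlinarith


lemma ne_top_of_le_coe {v : EReal} {c : ℝ} (h : v ≤ (c : EReal)) : v ≠ ⊤ := by
  intro hv; rw [hv] at h; exact absurd h (by simp)

lemma toReal_le_of_le_coe {v : EReal} (hb : v ≠ ⊥) {c : ℝ} (h : v ≤ (c : EReal)) :
    v.toReal ≤ c := by
  rw [← EReal.coe_toReal (ne_top_of_le_coe h) hb] at h; exact_mod_cast h

end FenchelAux

section ConeAux
variable {V : Type*} [AddCommGroup V] [Module ℝ V] {S : Set V}

lemma coneHull_smul_mem {w : V} (hw : w ∈ coneHull S) {c : ℝ} (hc : 0 ≤ c) :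
    c • w ∈ coneHull S := by
  obtain ⟨r, hr, yy, hy, rfl⟩ := hw
  exact ⟨c * r, mul_nonneg hc hr, yy, hy, (smul_smul c r yy)⟩

lemma subset_coneHull : S ⊆ coneHull S := fun w hw =>
  ⟨1, zero_le_one, w, subset_convexHull ℝ S hw, (one_smul ℝ w).symm⟩

lemma zero_mem_coneHull (hS : S.Nonempty) : (0 : V) ∈ coneHull S := by
  obtain ⟨w, hw⟩ := hS
  exact ⟨0, le_refl 0, w, subset_convexHull ℝ S hw, (zero_smul ℝ w).symm⟩

lemma convex_coneHull : Convex ℝ (coneHull S) := by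
  rintro w1 h1 w2 h2 a b ha hb hab
  obtain ⟨r1, hr1, y1, hy1, rfl⟩ := h1
  obtain ⟨r2, hr2, y2, hy2, rfl⟩ := h2
  have har1 : 0 ≤ a * r1 := mul_nonneg ha hr1
  have hbr2 : 0 ≤ b * r2 := mul_nonneg hb hr2
  by_cases hR : a * r1 + b * r2 = 0
  · have e1 : a * r1 = 0 := by linarith
    have e2 : b * r2 = 0 := by linarith
    refine ⟨0, le_refl 0, y1, hy1, ?_⟩
    rw [smul_smul, smul_smul, e1, e2, zero_smul, zero_smul]
    exact add_zero 0
  · set R := a * r1 + b * r2 with hRdef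
    have hRpos : 0 < R := lt_of_le_of_ne (by positivity) (Ne.symm hR)
    refine ⟨R, le_of_lt hRpos, (a * r1 / R) • y1 + (b * r2 / R) • y2, ?_, ?_⟩
    · refine (convex_convexHull ℝ S) hy1 hy2
        (div_nonneg har1 (le_of_lt hRpos)) (div_nonneg hbr2 (le_of_lt hRpos)) ?_
      field_simp
      exact hRdef.symm
    · rw [smul_add, smul_smul, smul_smul, smul_smul, smul_smul]
      have e1 : R * (a * r1 / R) = a * r1 := by field_simp
      have e2 : R * (b * r2 / R) = b * r2 := by field_simp
      rw [e1, e2]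

end ConeAux

lemma deriv_ray {T : Type*} {X : Type*} [NormedAddCommGroup X] [NormedSpace ℝ X]
    (f : T → X → EReal) (xb : X) (φ : Linf T × X → ℝ) (D : Linf T × X →L[ℝ] ℝ)
    (hD : HasFDerivAt φ D ((0 : Linf T), xb))
    (hmin : ∃ W ∈ nhds ((0 : Linf T), xb), ∀ q ∈ W, q.2 ∈ feas f q.1 → φ (0, xb) ≤ φ q)
    (q : Linf T) (y : X)
    (hfeas : ∀ s : ℝ, 0 < s → s ≤ 1 → (xb + s • y) ∈ feas f (s • q)) :
    0 ≤ D (q, y) := by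
  obtain ⟨W, hW, hWmin⟩ := hmin
  set c : ℝ → Linf T × X := fun s => (s • q, xb + s • y) with hcdef
  have hc : HasDerivAt c (q, y) 0 := by
    apply HasDerivAt.prodMk
    · simpa using (hasDerivAt_id (0 : ℝ)).smul_const q
    · simpa using ((hasDerivAt_id (0 : ℝ)).smul_const y).const_add xb
  have hc0 : c 0 = ((0 : Linf T), xb) := by simp [hcdef]
  have hD' : HasFDerivAt φ D (c 0) := hc0 ▸ hD
  have hφc : HasDerivAt (φ ∘ c) (D (q, y)) 0 := hD'.comp_hasDerivAt 0 hc
  rw [hasDerivAt_iff_tendsto_slope] at hφc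
  have hmono : nhdsWithin (0 : ℝ) (Set.Ioi 0) ≤ nhdsWithin (0 : ℝ) {(0 : ℝ)}ᶜ :=
    nhdsWithin_mono 0 (fun x hx => ne_of_gt hx)
  refine ge_of_tendsto (hφc.mono_left hmono) ?_
  have e1 : ∀ᶠ s in nhdsWithin (0 : ℝ) (Set.Ioi 0), c s ∈ W := by
    apply eventually_nhdsWithin_of_eventually_nhds
    exact hc.continuousAt.eventually_mem (hc0 ▸ hW)
  filter_upwards [e1, Ioc_mem_nhdsGT_of_mem (Set.left_mem_Ico.2 zero_lt_one),
    self_mem_nhdsWithin] with s hsW hs01 hspos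
  have hs0 : (0 : ℝ) < s := hspos
  have hfs : (c s).2 ∈ feas f (c s).1 := hfeas s hs0 hs01.2
  have hφs : φ ((0 : Linf T), xb) ≤ φ (c s) := hWmin (c s) hsW hfs
  have hsl : slope (φ ∘ c) 0 s = (φ (c s) - φ ((0 : Linf T), xb)) / s := by
    rw [slope_def_field]
    rw [Function.comp_apply, Function.comp_apply, hc0, sub_zero]
  rw [hsl]
  exact div_nonneg (by linarith) (le_of_lt hs0)

instance weakDual_locallyConvex {E : Type*} [NormedAddCommGroup E] [NormedSpace ℝ E] :
    LocallyConvexSpace ℝ (WeakDual ℝ E) :=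
  WeakBilin.locallyConvexSpace (B := topDualPairing ℝ E)

end AuxProof


set_option maxHeartbeats 2000000 in
lemma weak3_separation {T : Type*} {X : Type*} [NormedAddCommGroup X] [NormedSpace ℝ X]
    {K : Set ((Linf T →L[ℝ] ℝ) × ((X →L[ℝ] ℝ) × ℝ))} (hK : Convex ℝ K)
    (h0 : (0 : (Linf T →L[ℝ] ℝ) × ((X →L[ℝ] ℝ) × ℝ)) ∈ K)
    (hsc : ∀ w ∈ K, ∀ c : ℝ, 0 ≤ c → c • w ∈ K)
    {tgt : (Linf T →L[ℝ] ℝ) × ((X →L[ℝ] ℝ) × ℝ)}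
    (hq : tgt ∉ wclosure3 K) :
    ∃ (p : Linf T) (x : X) (r : ℝ),
      (∀ w ∈ K, 0 ≤ w.1 p + w.2.1 x + w.2.2 * r) ∧
      tgt.1 p + tgt.2.1 x + tgt.2.2 * r < 0 := by
  classical
  set e : (Linf T →L[ℝ] ℝ) × ((X →L[ℝ] ℝ) × ℝ) → (WeakDual ℝ (Linf T) × (WeakDual ℝ X × ℝ)) :=
    fun w => ((StrongDual.toWeakDual w.1 : WeakDual ℝ (Linf T)),
      ((StrongDual.toWeakDual w.2.1 : WeakDual ℝ X), w.2.2)) with hedef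
  have hq' : e tgt ∉ closure (e '' K) := hq
  have heLin : IsLinearMap ℝ e := ⟨fun a b => rfl, fun c a => rfl⟩
  have hAconv : Convex ℝ (closure (e '' K)) := (hK.is_linear_image heLin).closure
  obtain ⟨F, u0, hF1, hF2⟩ := geometric_hahn_banach_point_closed hAconv isClosed_closure hq'
  set g1 : WeakDual ℝ (Linf T) →L[ℝ] ℝ :=
    F.comp (ContinuousLinearMap.inl ℝ (WeakDual ℝ (Linf T)) (WeakDual ℝ X × ℝ)) with hg1
  set g23 : (WeakDual ℝ X × ℝ) →L[ℝ] ℝ :=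
    F.comp (ContinuousLinearMap.inr ℝ (WeakDual ℝ (Linf T)) (WeakDual ℝ X × ℝ)) with hg23
  set g2 : WeakDual ℝ X →L[ℝ] ℝ :=
    g23.comp (ContinuousLinearMap.inl ℝ (WeakDual ℝ X) ℝ) with hg2
  set g3 : ℝ →L[ℝ] ℝ := g23.comp (ContinuousLinearMap.inr ℝ (WeakDual ℝ X) ℝ) with hg3
  obtain ⟨p, hp⟩ := weakdual_clm_exists_pred g1
  obtain ⟨x, hx⟩ := weakdual_clm_exists_pred g2
  set r : ℝ := g3 1 with hrdef
  have hval : ∀ w : (Linf T →L[ℝ] ℝ) × ((X →L[ℝ] ℝ) × ℝ),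
      F (e w) = w.1 p + w.2.1 x + w.2.2 * r := by
    intro w
    have h1 : ∀ (aa : WeakDual ℝ (Linf T)) (bc : WeakDual ℝ X × ℝ),
        F (aa, bc) = g1 aa + g23 bc := by
      intro aa bc
      rw [hg1, hg23]
      simp only [ContinuousLinearMap.comp_apply, ContinuousLinearMap.inl_apply,
        ContinuousLinearMap.inr_apply]
      rw [← map_add]
      congr 1
      simp [Prod.ext_iff]
    have h2 : ∀ (bb : WeakDual ℝ X) (cc : ℝ), g23 (bb, cc) = g2 bb + g3 cc := by
      intro bb cc
      rw [hg2, hg3]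
      simp only [ContinuousLinearMap.comp_apply, ContinuousLinearMap.inl_apply,
        ContinuousLinearMap.inr_apply]
      rw [← map_add]
      congr 1
      simp [Prod.ext_iff]
    have h3 : ∀ cc : ℝ, g3 cc = cc * r := by
      intro cc
      have h := map_smul g3 cc (1 : ℝ)
      rw [hrdef]
      simpa [smul_eq_mul] using h
    show F (StrongDual.toWeakDual w.1, (StrongDual.toWeakDual w.2.1, w.2.2)) = _
    rw [h1, h2, h3, hp, hx]
    exact (add_assoc _ _ _).symm
  have hu0 : u0 < 0 := by
    have h := hF2 (e 0) (subset_closure (Set.mem_image_of_mem e h0))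
    have he0 : e 0 = 0 := rfl
    rw [he0, map_zero] at h
    exact h
  refine ⟨p, x, r, ?_, ?_⟩
  · intro w hw
    by_contra hneg
    push_neg at hneg
    have hmu : 0 ≤ u0 / (w.1 p + w.2.1 x + w.2.2 * r) :=
      div_nonneg_of_nonpos (le_of_lt hu0) (le_of_lt hneg)
    have hmem := hsc w hw _ hmu
    have h := hF2 _ (subset_closure (Set.mem_image_of_mem e hmem))
    rw [hval] at h
    set mu : ℝ := u0 / (w.1 p + w.2.1 x + w.2.2 * r) with hmudef
    have hc : (mu • w).1 p + (mu • w).2.1 x + (mu • w).2.2 * r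
        = mu * (w.1 p + w.2.1 x + w.2.2 * r) := by
      simp only [Prod.smul_fst, Prod.smul_snd, ContinuousLinearMap.smul_apply, smul_eq_mul]
      ring
    rw [hc, hmudef, div_mul_cancel₀ u0 (ne_of_lt hneg)] at h
    exact lt_irrefl u0 h
  · have htv := hF1
    rw [hval tgt] at htv
    linarith

set_option maxHeartbeats 1000000
set_option synthInstance.maxHeartbeats 200000

theorem stmt_9 {T : Type*} [Nonempty T]
    {X : Type*} [NormedAddCommGroup X] [NormedSpace ℝ X] [CompleteSpace X]
    (f : T → X → EReal)
    (hproper : ∀ t, ErealProper (f t))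
    (hlsc : ∀ t, LowerSemicontinuous (f t))
    (hconv : ∀ t, ErealConvexOn (f t))
    (xb : X) (hxb : xb ∈ feas f 0)
    (φ : Linf T × X → ℝ) (D : Linf T × X →L[ℝ] ℝ)
    (hD : HasFDerivAt φ D ((0 : Linf T), xb))
    (hmin : ∃ W ∈ nhds ((0 : Linf T), xb), ∀ q ∈ W, q.2 ∈ feas f q.1 → φ (0, xb) ≤ φ q) :
    (-(D.comp (ContinuousLinearMap.inl ℝ (Linf T) X)),
      (-(D.comp (ContinuousLinearMap.inr ℝ (Linf T) X)),
        -((D.comp (ContinuousLinearMap.inr ℝ (Linf T) X)) xb))) ∈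
      wclosure3 (coneHull (⋃ t : T,
      ({-(dirac T t)} : Set (Linf T →L[ℝ] ℝ)) ×ˢ gphConj (f t))) := by
  classical
  by_contra hq
  set S : Set ((Linf T →L[ℝ] ℝ) × ((X →L[ℝ] ℝ) × ℝ)) :=
    ⋃ t : T, (({-(dirac T t)} : Set (Linf T →L[ℝ] ℝ)) ×ˢ gphConj (f t)) with hSdef
  have hSne : S.Nonempty := by
    obtain ⟨t0⟩ := ‹Nonempty T›
    obtain ⟨u, hu⟩ := exists_minorant (hproper t0) (hlsc t0) (hconv t0)
    exact ⟨(-(dirac T t0), (u, (conj (f t0) u).toReal)),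
      Set.mem_iUnion.2 ⟨t0, Set.mk_mem_prod rfl (conj_eq_coe (hproper t0) hu)⟩⟩
  obtain ⟨p, x, r, hLam, htv⟩ := weak3_separation (T := T) (X := X) (K := coneHull S)
    convex_coneHull (zero_mem_coneHull hSne) (fun w hw c hc => coneHull_smul_mem hw hc) hq
  have hcstr : ∀ t : T, ∀ u ∈ domConj (f t),
      p t ≤ u x + (conj (f t) u).toReal * r := by
    intro t u hu
    have hwS : ((-(dirac T t) : Linf T →L[ℝ] ℝ), (u, (conj (f t) u).toReal)) ∈ S :=
      Set.mem_iUnion.2 ⟨t, Set.mk_mem_prod rfl (conj_eq_coe (hproper t) hu)⟩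
    have h := hLam _ (subset_coneHull hwS)
    simp only [ContinuousLinearMap.neg_apply] at h
    have hd : dirac T t p = p t := rfl
    rw [hd] at h
    linarith
  have hkey : 0 < D (p, (0 : X)) + D ((0 : Linf T), x) + D ((0 : Linf T), xb) * r := by
    have h1 : (-(D.comp (ContinuousLinearMap.inl ℝ (Linf T) X))) p = -(D (p, (0 : X))) := by
      simp [ContinuousLinearMap.comp_apply]
    have h2 : (-(D.comp (ContinuousLinearMap.inr ℝ (Linf T) X))) x = -(D ((0 : Linf T), x)) := by
      simp [ContinuousLinearMap.comp_apply]
    have h3 : (D.comp (ContinuousLinearMap.inr ℝ (Linf T) X)) xb = D ((0 : Linf T), xb) := by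
      simp [ContinuousLinearMap.comp_apply]
    rw [show ((-(D.comp (ContinuousLinearMap.inl ℝ (Linf T) X)),
      (-(D.comp (ContinuousLinearMap.inr ℝ (Linf T) X)),
        -((D.comp (ContinuousLinearMap.inr ℝ (Linf T) X)) xb))) :
        (Linf T →L[ℝ] ℝ) × ((X →L[ℝ] ℝ) × ℝ)).1
        = -(D.comp (ContinuousLinearMap.inl ℝ (Linf T) X)) from rfl, h1] at htv
    simp only [h2, h3] at htv
    nlinarith [htv]
  have hxbt : ∀ t : T, f t xb ≤ ((0 : ℝ) : EReal) := by
    intro t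
    have h := hxb t
    have h0 : ((0 : Linf T) t : ℝ) = 0 := by
      rw [lp.coeFn_zero]; rfl
    rwa [h0] at h
  rcases le_or_gt r 0 with hrneg | hrpos
  · -- case r ≤ 0
    set q' : Linf T := -p with hq'def
    set y' : X := -(x + r • xb) with hy'def
    have hfeas : ∀ s : ℝ, 0 < s → s ≤ 1 → (xb + s • y') ∈ feas f (s • q') := by
      intro s hs _ t
      show f t (xb + s • y') ≤ (((s • q') t : ℝ) : EReal)
      have hco : ((s • q') t : ℝ) = s * (-(p t)) := by
        rw [hq'def, lp.coeFn_smul, Pi.smul_apply, lp.coeFn_neg, Pi.neg_apply, smul_eq_mul]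
      rw [hco]
      apply le_of_forall_dom (hproper t) (hlsc t) (hconv t)
      intro u hu
      have hxbtop : f t xb ≠ ⊤ := ne_top_of_le_coe (hxbt t)
      have hxbreal : (f t xb).toReal ≤ 0 := toReal_le_of_le_coe ((hproper t).1 xb) (hxbt t)
      have hfy := fenchel_young (hproper t) hu hxbtop
      have huxb : u xb ≤ (conj (f t) u).toReal := by linarith
      have hpt := hcstr t u hu
      have h3 : u y' = -(u x) - r * (u xb) := by
        rw [hy'def, map_neg, map_add, map_smul]
        simp only [smul_eq_mul]
        ring
      have huy : u y' ≤ -(p t) := by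
        nlinarith [mul_le_mul_of_nonneg_left huxb (neg_nonneg.2 hrneg)]
      have h4 : u (xb + s • y') = u xb + s * (u y') := by
        rw [map_add, map_smul]; simp [smul_eq_mul]
      rw [h4]
      nlinarith [mul_le_mul_of_nonneg_left huy (le_of_lt hs)]
    have h0D := deriv_ray f xb φ D hD hmin q' y' hfeas
    have hDval : D (q', y') = -(D (p, (0 : X)) + D ((0 : Linf T), x)
        + r * D ((0 : Linf T), xb)) := by
      have hpair : ((q', y') : Linf T × X) = -((p, x + r • xb) : Linf T × X) := by
        rw [hq'def, hy'def]
        simp [Prod.ext_iff]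
      have hsum : ((p, x + r • xb) : Linf T × X)
          = ((p, (0 : X)) : Linf T × X) + (((0 : Linf T), x) : Linf T × X)
            + r • (((0 : Linf T), xb) : Linf T × X) := by
        simp [Prod.ext_iff]
      rw [hpair, map_neg, hsum, map_add, map_add, map_smul]
      simp [smul_eq_mul]
    rw [hDval] at h0D
    nlinarith [hkey, h0D]
  · -- case 0 < r
    have hr0 : r ≠ 0 := ne_of_gt hrpos
    set z : X := (-r⁻¹) • x with hzdef
    have hz : ∀ t : T, f t z ≤ ((-(r⁻¹ * p t) : ℝ) : EReal) := by
      intro t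
      apply le_of_forall_dom (hproper t) (hlsc t) (hconv t)
      intro u hu
      have hpt := hcstr t u hu
      have h1 : u z = -r⁻¹ * (u x) := by
        rw [hzdef, map_smul]; simp [smul_eq_mul]
      rw [h1]
      have h2 := mul_le_mul_of_nonneg_left hpt (le_of_lt (inv_pos.2 hrpos))
      have h3 : r⁻¹ * (u x + (conj (f t) u).toReal * r)
          = r⁻¹ * u x + (conj (f t) u).toReal := by
        field_simp
      rw [h3] at h2
      linarith
    set q' : Linf T := (-r⁻¹) • p with hq'def
    set y' : X := z - xb with hy'def
    have hfeas : ∀ s : ℝ, 0 < s → s ≤ 1 → (xb + s • y') ∈ feas f (s • q') := by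
      intro s hs hs1 t
      show f t (xb + s • y') ≤ (((s • q') t : ℝ) : EReal)
      have hco : ((s • q') t : ℝ) = s * (-(r⁻¹ * p t)) := by
        rw [hq'def, lp.coeFn_smul, Pi.smul_apply, lp.coeFn_smul, Pi.smul_apply,
          smul_eq_mul, smul_eq_mul]
        ring
      have hpoint : xb + s • y' = (1 - s) • xb + s • z := by
        rw [hy'def, smul_sub, sub_smul, one_smul]
        abel
      rw [hco, hpoint]
      have hcomb := hconv t xb z (1 - s) s (by linarith) (le_of_lt hs) (by ring)
      refine le_trans hcomb ?_
      have hxbtop : f t xb ≠ ⊤ := ne_top_of_le_coe (hxbt t)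
      have hxbreal : (f t xb).toReal ≤ 0 := toReal_le_of_le_coe ((hproper t).1 xb) (hxbt t)
      have hztop : f t z ≠ ⊤ := ne_top_of_le_coe (hz t)
      have hzreal : (f t z).toReal ≤ -(r⁻¹ * p t) := toReal_le_of_le_coe ((hproper t).1 z) (hz t)
      rw [← EReal.coe_toReal hxbtop ((hproper t).1 xb), ← EReal.coe_toReal hztop ((hproper t).1 z),
        ← EReal.coe_mul, ← EReal.coe_mul, ← EReal.coe_add]
      have hreal : (1 - s) * (f t xb).toReal + s * (f t z).toReal ≤ s * (-(r⁻¹ * p t)) := by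
        nlinarith [mul_le_mul_of_nonneg_left hzreal (le_of_lt hs),
          mul_nonpos_of_nonneg_of_nonpos (by linarith : (0:ℝ) ≤ 1 - s) hxbreal]
      exact_mod_cast hreal
    have h0D := deriv_ray f xb φ D hD hmin q' y' hfeas
    have hDval : D (q', y') = -r⁻¹ * (D (p, (0 : X)) + D ((0 : Linf T), x))
        - D ((0 : Linf T), xb) := by
      have hpair : ((q', y') : Linf T × X)
          = (-r⁻¹) • (((p, (0 : X)) : Linf T × X) + (((0 : Linf T), x) : Linf T × X))
            + (-(((0 : Linf T), xb) : Linf T × X)) := by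
        rw [hq'def, hy'def, hzdef]
        refine Prod.ext ?_ ?_
        · simp
        · simp
          exact sub_eq_add_neg _ _
      rw [hpair, map_add, map_smul, map_neg, map_add]
      simp only [smul_eq_mul]
      try ring
    rw [hDval] at h0D
    have h5 : 0 ≤ r * (-r⁻¹ * (D (p, (0 : X)) + D ((0 : Linf T), x)) - D ((0 : Linf T), xb)) :=
      mul_nonneg (le_of_lt hrpos) h0D
    have h6 : r * (-r⁻¹ * (D (p, (0 : X)) + D ((0 : Linf T), x)) - D ((0 : Linf T), xb))
        = -(D (p, (0 : X)) + D ((0 : Linf T), x)) - r * D ((0 : Linf T), xb) := by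
      field_simp
      try ring
    rw [h6] at h5
    nlinarith [hkey, h5]
end

section
/- (Extended Farkas lemma.) Let p ∈ l_∞(T) with F(p) ≠ ∅, and let (v, α) ∈ X* × ℝ. Then the following are equivalent: (i) ⟨v, x⟩ ≤ α for every x ∈ F(p); (ii) (v, α) ∈ cl*( cone( ⋃_{t∈T} epi (f_t − p_t)* ) ). -/
open Filter
open scoped ENNReal

section FarkasAux

open Set

variable {X : Type*} [NormedAddCommGroup X] [NormedSpace ℝ X]

lemma farkas_fy (g : X → EReal) (u : X →L[ℝ] ℝ) (x : X) :
    (u x : EReal) - g x ≤ conj g u :=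
  le_iSup (fun y => (u y : EReal) - g y) x

lemma farkas_exists_real_val {g : X → EReal} (hp : ErealProper g) :
    ∃ (x : X) (c : ℝ), g x = (c : EReal) := by
  obtain ⟨x, hx⟩ := hp.2
  exact ⟨x, (g x).toReal, (EReal.coe_toReal hx (hp.1 x)).symm⟩

lemma farkas_conj_ne_bot {g : X → EReal} (hp : ErealProper g) (u : X →L[ℝ] ℝ) :
    conj g u ≠ ⊥ := by
  obtain ⟨x, c, hc⟩ := farkas_exists_real_val hp
  have h := farkas_fy g u x
  rw [hc] at h
  intro hb
  rw [hb, le_bot_iff, ← EReal.coe_sub] at h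
  exact EReal.coe_ne_bot _ h

/-- The real epigraph of an `EReal`-valued function. -/
def farkasEpi (g : X → EReal) : Set (X × ℝ) := {q | g q.1 ≤ (q.2 : EReal)}

lemma farkas_epi_closed {g : X → EReal} (h : LowerSemicontinuous g) :
    IsClosed (farkasEpi g) := by
  have h1 : IsClosed {p : X × EReal | g p.1 ≤ p.2} := h.isClosed_epigraph
  have h2 : farkasEpi g =
      (fun q : X × ℝ => ((q.1, (q.2 : EReal)) : X × EReal)) ⁻¹' {p : X × EReal | g p.1 ≤ p.2} :=
    rfl
  rw [h2]
  exact h1.preimage (continuous_fst.prodMk (continuous_coe_real_ereal.comp continuous_snd))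

lemma farkas_epi_convex {g : X → EReal} (h : ErealConvexOn g) :
    Convex ℝ (farkasEpi g) := by
  rintro ⟨x, s⟩ hx ⟨y, t⟩ hy a b ha hb hab
  simp only [farkasEpi, Set.mem_setOf_eq] at hx hy ⊢
  calc g (a • x + b • y) ≤ (a : EReal) * g x + (b : EReal) * g y := h x y a b ha hb hab
    _ ≤ (a : EReal) * (s : EReal) + (b : EReal) * (t : EReal) := by
        have ha' : (0 : EReal) ≤ (a : EReal) := by exact_mod_cast ha
        have hb' : (0 : EReal) ≤ (b : EReal) := by exact_mod_cast hb
        exact add_le_add (mul_le_mul_of_nonneg_left hx ha') (mul_le_mul_of_nonneg_left hy hb')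
    _ = ((a * s + b * t : ℝ) : EReal) := by norm_cast

lemma farkas_clm_decomp {E : Type*} [AddCommGroup E] [Module ℝ E] [TopologicalSpace E]
    (f : (E × ℝ) →L[ℝ] ℝ) (y : E) (s : ℝ) :
    f (y, s) = f (y, 0) + s * f (0, 1) := by
  have h : ((y, s) : E × ℝ) = (y, (0 : ℝ)) + s • ((0 : E), (1 : ℝ)) := by
    simp [Prod.ext_iff]
  rw [h, map_add, map_smul, smul_eq_mul]

lemma farkas_exists_conj_lt_top {g : X → EReal} (hp : ErealProper g)
    (hlsc : LowerSemicontinuous g) (hconv : ErealConvexOn g) :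
    ∃ (u : X →L[ℝ] ℝ) (c : ℝ), conj g u ≤ (c : EReal) := by
  obtain ⟨x0, c0, hc0⟩ := farkas_exists_real_val hp
  have hne : ((x0, c0 - 1) : X × ℝ) ∉ farkasEpi g := by
    simp only [farkasEpi, Set.mem_setOf_eq, hc0, EReal.coe_le_coe_iff]
    linarith
  obtain ⟨f, u, hfs, hfu⟩ :=
    geometric_hahn_banach_closed_point (farkas_epi_convex hconv) (farkas_epi_closed hlsc) hne
  set r := f (0, 1) with hr_def
  have hdec : ∀ (y : X) (s : ℝ), f (y, s) = f (y, 0) + s * r := fun y s => farkas_clm_decomp f y s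
  have hmem0 : ((x0, c0) : X × ℝ) ∈ farkasEpi g := by
    simp [farkasEpi, hc0]
  have h1 : f (x0, c0) < u := hfs _ hmem0
  have h2 : u < f (x0, c0 - 1) := hfu
  rw [hdec] at h1 h2
  have hr : r < 0 := by nlinarith
  have hrpos : 0 < -r := by linarith
  set ψ : X →L[ℝ] ℝ := f.comp (ContinuousLinearMap.inl ℝ X ℝ) with hψ_def
  have hψ : ∀ y : X, ψ y = f (y, 0) := fun y => rfl
  refine ⟨(-r)⁻¹ • ψ, (-r)⁻¹ * u, ?_⟩
  apply iSup_le
  intro y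
  by_cases hy : g y = ⊤
  · rw [hy, EReal.sub_top]
    exact bot_le
  · have hyr : g y = (((g y).toReal : ℝ) : EReal) := (EReal.coe_toReal hy (hp.1 y)).symm
    set t := (g y).toReal
    have hmem : ((y, t) : X × ℝ) ∈ farkasEpi g := by
      simp only [farkasEpi, Set.mem_setOf_eq]
      rw [hyr]
    have h3 := hfs _ hmem
    rw [hdec, ← hψ] at h3
    rw [hyr, ← EReal.coe_sub, EReal.coe_le_coe_iff]
    simp only [ContinuousLinearMap.smul_apply, smul_eq_mul]
    have hrne : r ≠ 0 := ne_of_lt hr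
    have e1 : (-r)⁻¹ * ψ y - t = (-r)⁻¹ * (ψ y + t * r) := by field_simp; ring
    rw [e1]
    exact le_trans (mul_le_mul_of_nonneg_left h3.le (inv_pos.2 hrpos).le) le_rfl

lemma farkas_biconj {g : X → EReal} (hp : ErealProper g)
    (hlsc : LowerSemicontinuous g) (hconv : ErealConvexOn g) (x : X) (β : ℝ)
    (h : ∀ u : X →L[ℝ] ℝ, (u x : EReal) - conj g u ≤ (β : EReal)) :
    g x ≤ (β : EReal) := by
  by_contra hgx
  push_neg at hgx
  have hne : ((x, β) : X × ℝ) ∉ farkasEpi g := by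
    simp only [farkasEpi, Set.mem_setOf_eq]
    exact not_le_of_gt hgx
  obtain ⟨f, u, hfs, hfu⟩ :=
    geometric_hahn_banach_closed_point (farkas_epi_convex hconv) (farkas_epi_closed hlsc) hne
  set r := f (0, 1) with hr_def
  have hdec : ∀ (y : X) (s : ℝ), f (y, s) = f (y, 0) + s * r := fun y s => farkas_clm_decomp f y s
  set ψ : X →L[ℝ] ℝ := f.comp (ContinuousLinearMap.inl ℝ X ℝ) with hψ_def
  have hψ : ∀ y : X, ψ y = f (y, 0) := fun y => rfl
  obtain ⟨x0, c0, hc0⟩ := farkas_exists_real_val hp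
  have hr : r ≤ 0 := by
    by_contra hrp
    push_neg at hrp
    obtain ⟨n, hn1⟩ := exists_nat_gt ((u - ψ x0 - c0 * r) / r)
    have hn0 : (0 : ℝ) ≤ (n : ℝ) := Nat.cast_nonneg n
    have hmem : ((x0, c0 + n) : X × ℝ) ∈ farkasEpi g := by
      simp only [farkasEpi, Set.mem_setOf_eq, hc0, EReal.coe_le_coe_iff]
      linarith
    have h3 := hfs _ hmem
    rw [hdec, ← hψ] at h3
    rw [div_lt_iff₀ hrp] at hn1
    linarith
  have hfux : u < ψ x + β * r := by
    have := hfu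
    rw [hdec, ← hψ] at this
    exact this
  rcases lt_or_eq_of_le hr with hrneg | hrzero
  · -- r < 0
    have hrpos : 0 < -r := by linarith
    set w : X →L[ℝ] ℝ := (-r)⁻¹ • ψ with hw_def
    have hconj_w : conj g w ≤ (((-r)⁻¹ * u : ℝ) : EReal) := by
      apply iSup_le
      intro y
      by_cases hy : g y = ⊤
      · rw [hy, EReal.sub_top]; exact bot_le
      · have hyr : g y = (((g y).toReal : ℝ) : EReal) := (EReal.coe_toReal hy (hp.1 y)).symm
        set t := (g y).toReal
        have hmem : ((y, t) : X × ℝ) ∈ farkasEpi g := by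
          simp only [farkasEpi, Set.mem_setOf_eq]; rw [hyr]
        have h3 := hfs _ hmem
        rw [hdec, ← hψ] at h3
        rw [hyr, ← EReal.coe_sub, EReal.coe_le_coe_iff]
        simp only [hw_def, ContinuousLinearMap.smul_apply, smul_eq_mul]
        have hrne : r ≠ 0 := ne_of_lt hrneg
        have e1 : (-r)⁻¹ * ψ y - t = (-r)⁻¹ * (ψ y + t * r) := by field_simp; ring
        rw [e1]
        exact mul_le_mul_of_nonneg_left h3.le (inv_pos.2 hrpos).le
    have hwx : (-r)⁻¹ * u + β < w x := by
      simp only [hw_def, ContinuousLinearMap.smul_apply, smul_eq_mul]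
      have hrne : r ≠ 0 := ne_of_lt hrneg
      have e1 : (-r)⁻¹ * (ψ x + β * r) = (-r)⁻¹ * ψ x - β := by field_simp; ring
      have h4 := mul_lt_mul_of_pos_left hfux (inv_pos.2 hrpos)
      rw [e1] at h4
      linarith
    have hchain : ((w x - (-r)⁻¹ * u : ℝ) : EReal) ≤ (β : EReal) := by
      calc ((w x - (-r)⁻¹ * u : ℝ) : EReal)
          = (w x : EReal) - (((-r)⁻¹ * u : ℝ) : EReal) := by rw [EReal.coe_sub]
        _ ≤ (w x : EReal) - conj g w := EReal.sub_le_sub le_rfl hconj_w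
        _ ≤ (β : EReal) := h w
    rw [EReal.coe_le_coe_iff] at hchain
    linarith
  · -- r = 0
    have hψ_dom : ∀ y : X, g y ≠ ⊤ → ψ y < u := by
      intro y hy
      have hyr : g y = (((g y).toReal : ℝ) : EReal) := (EReal.coe_toReal hy (hp.1 y)).symm
      have hmem : ((y, (g y).toReal) : X × ℝ) ∈ farkasEpi g := le_of_eq hyr
      have h3 := hfs _ hmem
      rw [hdec, ← hψ] at h3
      rw [hrzero] at h3
      linarith
    have hψx : u < ψ x := by
      rw [hrzero] at hfux
      linarith
    obtain ⟨u0, c0', hu0⟩ := farkas_exists_conj_lt_top hp hlsc hconv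
    have hkey : ∀ n : ℕ, (n : ℝ) * (ψ x - u) ≤ β + c0' - u0 x := by
      intro n
      set w : X →L[ℝ] ℝ := u0 + (n : ℝ) • ψ with hw_def
      have hconj_w : conj g w ≤ ((c0' + n * u : ℝ) : EReal) := by
        apply iSup_le
        intro y
        by_cases hy : g y = ⊤
        · rw [hy, EReal.sub_top]; exact bot_le
        · have hyr : g y = (((g y).toReal : ℝ) : EReal) := (EReal.coe_toReal hy (hp.1 y)).symm
          set t := (g y).toReal
          have hu0y : u0 y - t ≤ c0' := by
            have h4 : ((u0 y : ℝ) : EReal) - g y ≤ (c0' : EReal) := le_trans (farkas_fy g u0 y) hu0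
            rw [hyr, ← EReal.coe_sub, EReal.coe_le_coe_iff] at h4
            exact h4
          have hψy : ψ y < u := hψ_dom y hy
          rw [hyr, ← EReal.coe_sub, EReal.coe_le_coe_iff]
          simp only [hw_def, ContinuousLinearMap.add_apply, ContinuousLinearMap.smul_apply,
            smul_eq_mul]
          nlinarith [mul_le_mul_of_nonneg_left (le_of_lt hψy) (Nat.cast_nonneg (α := ℝ) n)]
      have hchain : ((w x - (c0' + n * u) : ℝ) : EReal) ≤ (β : EReal) := by
        calc ((w x - (c0' + n * u) : ℝ) : EReal)
            = (w x : EReal) - ((c0' + n * u : ℝ) : EReal) := by rw [EReal.coe_sub]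
          _ ≤ (w x : EReal) - conj g w := EReal.sub_le_sub le_rfl hconj_w
          _ ≤ (β : EReal) := h w
      rw [EReal.coe_le_coe_iff] at hchain
      simp only [hw_def, ContinuousLinearMap.add_apply, ContinuousLinearMap.smul_apply,
        smul_eq_mul] at hchain
      nlinarith
    obtain ⟨n, hn⟩ := exists_nat_gt ((β + c0' - u0 x) / (ψ x - u))
    have hpos : 0 < ψ x - u := by linarith
    have := hkey n
    rw [div_lt_iff₀ hpos] at hn
    linarith

lemma farkas_mul_sub_real (a : ℝ) (ha : 0 ≤ a) (w : EReal) (c : ℝ) :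
    (a : EReal) * (w - (c : EReal)) = (a : EReal) * w - ((a * c : ℝ) : EReal) := by
  rcases eq_or_lt_of_le ha with rfl | hapos
  · simp [EReal.zero_mul]
  · have hapos' : (0 : EReal) < (a : EReal) := by exact_mod_cast hapos
    induction w using EReal.rec with
    | bot =>
        rw [EReal.bot_sub, EReal.mul_bot_of_pos hapos', EReal.bot_sub]
    | coe w =>
        rw [← EReal.coe_sub, ← EReal.coe_mul, ← EReal.coe_mul, ← EReal.coe_sub]
        norm_cast
        ring
    | top =>
        rw [EReal.top_sub_coe, EReal.mul_top_of_pos hapos', EReal.top_sub_coe]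

lemma farkas_sub_ne_bot {a : EReal} (ha : a ≠ ⊥) (c : ℝ) : a - (c : EReal) ≠ ⊥ := by
  induction a using EReal.rec with
  | bot => exact absurd rfl ha
  | coe a => rw [← EReal.coe_sub]; exact EReal.coe_ne_bot _
  | top => rw [EReal.top_sub_coe]; simp

lemma farkas_sub_ne_top {a : EReal} (ha : a ≠ ⊤) (c : ℝ) : a - (c : EReal) ≠ ⊤ := by
  induction a using EReal.rec with
  | bot => rw [EReal.bot_sub]; simp
  | coe a => rw [← EReal.coe_sub]; exact EReal.coe_ne_top _
  | top => exact absurd rfl ha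

lemma farkas_proper_sub {g : X → EReal} (hp : ErealProper g) (c : ℝ) :
    ErealProper (fun x => g x - (c : EReal)) := by
  constructor
  · exact fun x => farkas_sub_ne_bot (hp.1 x) c
  · obtain ⟨x, hx⟩ := hp.2
    exact ⟨x, farkas_sub_ne_top hx c⟩

lemma farkas_lsc_sub {g : X → EReal} (h : LowerSemicontinuous g) (c : ℝ) :
    LowerSemicontinuous fun x => g x - (c : EReal) := by
  intro x b hb
  have hiff : ∀ w : EReal, b + (c : EReal) < w ↔ b < w - (c : EReal) := fun w =>
    (EReal.lt_sub_iff_add_lt (Or.inl (EReal.coe_ne_bot c)) (Or.inl (EReal.coe_ne_top c))).symm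
  have hb' : b + (c : EReal) < g x := (hiff _).2 hb
  exact (h x _ hb').mono fun y hy => (hiff _).1 hy

lemma farkas_conv_sub {g : X → EReal} (h : ErealConvexOn g) (c : ℝ) :
    ErealConvexOn fun x => g x - (c : EReal) := by
  intro x y a b ha hb hab
  simp only
  have h1 := h x y a b ha hb hab
  have e : (a : EReal) * (g x - (c : EReal)) + (b : EReal) * (g y - (c : EReal))
      = ((a : EReal) * g x + (b : EReal) * g y) - (c : EReal) := by
    rw [farkas_mul_sub_real a ha, farkas_mul_sub_real b hb, sub_eq_add_neg, sub_eq_add_neg,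
      sub_eq_add_neg, ← EReal.coe_neg, ← EReal.coe_neg, ← EReal.coe_neg, add_add_add_comm,
      ← EReal.coe_add]
    congr 2
    linear_combination (-c) * hab
  rw [e]
  exact EReal.sub_le_sub h1 le_rfl

lemma farkas_coneHull_convex {V : Type*} [AddCommGroup V] [Module ℝ V] (S : Set V) :
    Convex ℝ (coneHull S) := by
  rintro w1 ⟨r1, hr1, y1, hy1, rfl⟩ w2 ⟨r2, hr2, y2, hy2, rfl⟩ a b ha hb hab
  by_cases hρ : a * r1 + b * r2 = 0
  · have h1 : a * r1 = 0 := by nlinarith [mul_nonneg ha hr1, mul_nonneg hb hr2]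
    have h2 : b * r2 = 0 := by nlinarith [mul_nonneg ha hr1, mul_nonneg hb hr2]
    refine ⟨0, le_rfl, y1, hy1, ?_⟩
    rw [smul_smul, smul_smul, h1, h2]
    simp
  · have hρnn : 0 ≤ a * r1 + b * r2 := by positivity
    have hρpos : 0 < a * r1 + b * r2 := lt_of_le_of_ne hρnn (Ne.symm hρ)
    refine ⟨a * r1 + b * r2, hρnn,
      (a * r1 / (a * r1 + b * r2)) • y1 + (b * r2 / (a * r1 + b * r2)) • y2, ?_, ?_⟩
    · refine (convex_convexHull ℝ S) hy1 hy2 (by positivity) (by positivity) ?_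
      field_simp
    · have e1 : (a * r1 + b * r2) * (a * r1 / (a * r1 + b * r2)) = a * r1 := by field_simp
      have e2 : (a * r1 + b * r2) * (b * r2 / (a * r1 + b * r2)) = b * r2 := by field_simp
      rw [smul_add, smul_smul, smul_smul, smul_smul, smul_smul, e1, e2]

lemma farkas_mem_coneHull {V : Type*} [AddCommGroup V] [Module ℝ V] {S : Set V} {y : V}
    (hy : y ∈ S) : y ∈ coneHull S :=
  ⟨1, zero_le_one, y, subset_convexHull ℝ S hy, (one_smul ℝ y).symm⟩

lemma farkas_smul_coneHull {V : Type*} [AddCommGroup V] [Module ℝ V] {S : Set V} {c : ℝ}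
    (hc : 0 ≤ c) {w : V} (hw : w ∈ coneHull S) : c • w ∈ coneHull S := by
  obtain ⟨r, hr, y, hy, rfl⟩ := hw
  exact ⟨c * r, mul_nonneg hc hr, y, hy, smul_smul c r y⟩

lemma farkas_zero_mem_coneHull {V : Type*} [AddCommGroup V] [Module ℝ V] {S : Set V}
    (hS : S.Nonempty) : (0 : V) ∈ coneHull S := by
  obtain ⟨y, hy⟩ := hS
  exact ⟨0, le_rfl, y, subset_convexHull ℝ S hy, (zero_smul ℝ y).symm⟩

instance farkas_locallyConvex : LocallyConvexSpace ℝ (WeakDual ℝ X) :=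
  WeakBilin.locallyConvexSpace (B := topDualPairing ℝ X)

instance farkas_topAddGroup : IsTopologicalAddGroup (WeakDual ℝ X) :=
  WeakBilin.instIsTopologicalAddGroup (topDualPairing ℝ X)

instance farkas_contSMul : ContinuousSMul ℝ (WeakDual ℝ X) :=
  WeakBilin.instContinuousSMul (topDualPairing ℝ X)

lemma farkas_weakDual_repr (G : WeakDual ℝ X →L[ℝ] ℝ) :
    ∃ x : X, ∀ u : WeakDual ℝ X, G u = u x := by
  classical
  have hbasis := LinearMap.hasBasis_weakBilin (topDualPairing ℝ X)
  have hmem : G ⁻¹' Set.Ioo (-1 : ℝ) 1 ∈ nhds (0 : WeakDual ℝ X) := by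
    have hc := G.continuous.continuousAt (x := (0 : WeakDual ℝ X))
    apply hc.preimage_mem_nhds
    rw [map_zero]
    exact Ioo_mem_nhds (by norm_num) (by norm_num)
  replace hmem := hbasis.mem_iff.1 hmem
  obtain ⟨U, hU, hUsub⟩ := hmem
  obtain ⟨s, ρ, hρ, rfl⟩ := (SeminormFamily.basisSets_iff _).1 hU
  set L : s → (WeakDual ℝ X) →ₗ[ℝ] ℝ := fun i => ((topDualPairing ℝ X).flip (i : X)) with hL
  have hker : (⨅ i : s, LinearMap.ker (L i)) ≤
      LinearMap.ker (G : WeakDual ℝ X →ₗ[ℝ] ℝ) := by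
    intro w hw
    simp only [Submodule.mem_iInf, LinearMap.mem_ker] at hw
    have hw' : ∀ i : s, w (i : X) = 0 := fun i => hw i
    have hwU : ∀ c : ℝ, c • w ∈ G ⁻¹' Set.Ioo (-1 : ℝ) 1 := by
      intro c
      apply hUsub
      simp only [id]
      refine (Seminorm.mem_ball_zero _).2 ?_
      apply Seminorm.finset_sup_apply_lt (E := X →L[ℝ] ℝ) hρ
      intro i hi
      change ‖(c • w) i‖ < ρ
      have h0 : w i = 0 := hw' ⟨i, hi⟩
      show ‖c • w i‖ < ρ
      rw [h0, smul_zero]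
      simpa using hρ
    have hGw : ∀ c : ℝ, c * G w < 1 := by
      intro c
      have := hwU c
      simp only [Set.mem_preimage, Set.mem_Ioo, map_smul, smul_eq_mul] at this
      exact this.2
    rw [LinearMap.mem_ker]
    show G w = 0
    by_contra hne
    have := hGw (2 / G w)
    rw [div_mul_cancel₀ 2 hne] at this
    norm_num at this
  have hspan := mem_span_of_iInf_ker_le_ker (𝕜 := ℝ) hker
  obtain ⟨cc, hcc⟩ := (Submodule.mem_span_range_iff_exists_fun ℝ).1 hspan
  refine ⟨∑ i : s, cc i • (i : X), ?_⟩
  intro u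
  have happ := congrArg (fun φ : WeakDual ℝ X →ₗ[ℝ] ℝ => φ u) hcc
  simp only [LinearMap.coe_sum, Finset.sum_apply, LinearMap.smul_apply, smul_eq_mul] at happ
  have hLu : ∀ i : s, (L i) u = u (i : X) := fun i => rfl
  have hsum : u (∑ i : s, cc i • (i : X)) = ∑ i : s, cc i * u (i : X) := by
    rw [map_sum]
    congr 1
    ext i
    rw [map_smul, smul_eq_mul]
  rw [hsum]
  have hsum2 : (∑ i : s, cc i * (L i) u) = ∑ i : s, cc i * u (i : X) := by
    apply Finset.sum_congr rfl
    intro i _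
    rw [hLu]
  rw [← hsum2, happ]
  rfl


end FarkasAux


set_option maxHeartbeats 2000000 in
theorem stmt_10 {T : Type*} [Nonempty T]
    {X : Type*} [NormedAddCommGroup X] [NormedSpace ℝ X] [CompleteSpace X]
    (f : T → X → EReal)
    (hproper : ∀ t, ErealProper (f t))
    (hlsc : ∀ t, LowerSemicontinuous (f t))
    (hconv : ∀ t, ErealConvexOn (f t))
    (p : Linf T) (hne : (feas f p).Nonempty) (v : X →L[ℝ] ℝ) (α : ℝ) :
    (∀ x ∈ feas f p, v x ≤ α) ↔
      (v, α) ∈ wclosure2 (coneHull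
        (⋃ t : T, epiConj (fun x => f t x - ((p t : ℝ) : EReal)))) := by
  classical
  set S : Set ((X →L[ℝ] ℝ) × ℝ) :=
    ⋃ t : T, epiConj (fun x => f t x - ((p t : ℝ) : EReal)) with hS_def
  have hgp : ∀ t, ErealProper (fun x => f t x - ((p t : ℝ) : EReal)) :=
    fun t => farkas_proper_sub (hproper t) _
  have hglsc : ∀ t, LowerSemicontinuous (fun x => f t x - ((p t : ℝ) : EReal)) :=
    fun t => farkas_lsc_sub (hlsc t) _
  have hgconv : ∀ t, ErealConvexOn (fun x => f t x - ((p t : ℝ) : EReal)) :=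
    fun t => farkas_conv_sub (hconv t) _
  have hfeas : ∀ y : X, y ∈ feas f p ↔
      ∀ t, f t y - ((p t : ℝ) : EReal) ≤ ((0 : ℝ) : EReal) := by
    intro y
    constructor
    · intro hy t
      have h1 : f t y ≤ ((0 : ℝ) : EReal) + ((p t : ℝ) : EReal) := by
        rw [← EReal.coe_add, zero_add]
        exact hy t
      exact (EReal.sub_le_iff_le_add (Or.inl (EReal.coe_ne_bot _))
        (Or.inl (EReal.coe_ne_top _))).2 h1
    · intro hy t
      have h1 := (EReal.sub_le_iff_le_add (Or.inl (EReal.coe_ne_bot _))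
        (Or.inl (EReal.coe_ne_top _))).1 (hy t)
      rwa [← EReal.coe_add, zero_add] at h1
  have hS_ne : S.Nonempty := by
    obtain ⟨t0⟩ := (inferInstance : Nonempty T)
    obtain ⟨u0, c0, hc0⟩ := farkas_exists_conj_lt_top (hgp t0) (hglsc t0) (hgconv t0)
    exact ⟨(u0, c0), Set.mem_iUnion.2 ⟨t0, hc0⟩⟩
  constructor
  · -- (i) → (ii)
    intro h
    by_contra hmem
    rw [wclosure2, Set.mem_setOf_eq] at hmem
    set K := (fun w : (X →L[ℝ] ℝ) × ℝ =>
      ((StrongDual.toWeakDual w.1 : WeakDual ℝ X), w.2)) '' (coneHull S) with hK_def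
    have hKconv : Convex ℝ (closure K) := by
      apply Convex.closure
      have he : (fun w : (X →L[ℝ] ℝ) × ℝ =>
          ((StrongDual.toWeakDual w.1 : WeakDual ℝ X), w.2)) =
          ⇑((StrongDual.toWeakDual (𝕜 := ℝ) (E := X)).toLinearMap.prodMap
            (LinearMap.id (R := ℝ) (M := ℝ))) := by
        funext w
        rfl
      rw [hK_def, he]
      exact (farkas_coneHull_convex S).linear_image _
    obtain ⟨Φ, u0, hΦK, hΦv⟩ :=
      geometric_hahn_banach_closed_point hKconv isClosed_closure hmem
    have hK0 : (0 : WeakDual ℝ X × ℝ) ∈ K := by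
      refine ⟨0, farkas_zero_mem_coneHull hS_ne, ?_⟩
      simp only [Prod.fst_zero, Prod.snd_zero, map_zero]
      rfl
    have hu0pos : 0 < u0 := by
      have h0 := hΦK 0 (subset_closure hK0)
      rwa [map_zero] at h0
    have hΦle : ∀ w ∈ coneHull S,
        Φ ((StrongDual.toWeakDual w.1 : WeakDual ℝ X), w.2) ≤ 0 := by
      intro w hw
      by_contra hpos
      push_neg at hpos
      set c : ℝ := u0 / Φ ((StrongDual.toWeakDual w.1 : WeakDual ℝ X), w.2) + 1 with hc_def
      have hcpos : 0 < c := by positivity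
      have hcw : c • w ∈ coneHull S := farkas_smul_coneHull hcpos.le hw
      have himg : ((StrongDual.toWeakDual (c • w).1 : WeakDual ℝ X), (c • w).2) =
          c • ((StrongDual.toWeakDual w.1 : WeakDual ℝ X), w.2) := by
        rw [Prod.smul_fst, Prod.smul_snd, map_smul]
        rfl
      have h1 := hΦK _ (subset_closure ⟨c • w, hcw, rfl⟩)
      beta_reduce at h1
      rw [himg, map_smul, smul_eq_mul] at h1
      rw [hc_def] at h1
      rw [div_add_one (ne_of_gt hpos), div_mul_cancel₀ _ (ne_of_gt hpos)] at h1
      linarith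
    set r : ℝ := Φ (0, 1) with hr_def
    set G : WeakDual ℝ X →L[ℝ] ℝ :=
      Φ.comp (ContinuousLinearMap.inl ℝ (WeakDual ℝ X) ℝ) with hG_def
    obtain ⟨xh, hxh⟩ := farkas_weakDual_repr G
    have hΦform : ∀ (u' : X →L[ℝ] ℝ) (γ : ℝ),
        Φ ((StrongDual.toWeakDual u' : WeakDual ℝ X), γ) = u' xh + γ * r := by
      intro u' γ
      rw [farkas_clm_decomp Φ _ γ]
      have h1 : Φ ((StrongDual.toWeakDual u' : WeakDual ℝ X), (0 : ℝ)) =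
          G (StrongDual.toWeakDual u') := rfl
      rw [h1, hxh]
      rfl
    have hkey : ∀ (t : T) (u' : X →L[ℝ] ℝ) (γ : ℝ),
        conj (fun x => f t x - ((p t : ℝ) : EReal)) u' ≤ (γ : EReal) →
        u' xh + γ * r ≤ 0 := by
      intro t u' γ hγ
      have hmem' : ((u', γ) : (X →L[ℝ] ℝ) × ℝ) ∈ S := Set.mem_iUnion.2 ⟨t, hγ⟩
      have h1 := hΦle _ (farkas_mem_coneHull hmem')
      rwa [hΦform] at h1
    have hvform : u0 < v xh + α * r := by
      rwa [hΦform] at hΦv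
    have hr : r ≤ 0 := by
      by_contra hrp
      push_neg at hrp
      obtain ⟨t0⟩ := (inferInstance : Nonempty T)
      obtain ⟨uu, cc, hcc⟩ := farkas_exists_conj_lt_top (hgp t0) (hglsc t0) (hgconv t0)
      set γ : ℝ := max cc ((1 - uu xh) / r) with hγ_def
      have hγcc : cc ≤ γ := le_max_left _ _
      have h1 : conj (fun x => f t0 x - ((p t0 : ℝ) : EReal)) uu ≤ (γ : EReal) :=
        le_trans hcc (by exact_mod_cast hγcc)
      have h2 := hkey t0 uu γ h1
      have h3 : (1 - uu xh) / r ≤ γ := le_max_right _ _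
      rw [div_le_iff₀ hrp] at h3
      linarith
    rcases lt_or_eq_of_le hr with hrneg | hrzero
    · -- r < 0
      have hrpos : 0 < -r := by linarith
      set x' : X := (-r)⁻¹ • xh with hx'_def
      have hx'feas : x' ∈ feas f p := by
        rw [hfeas]
        intro t
        apply farkas_biconj (hgp t) (hglsc t) (hgconv t)
        intro u'
        by_cases hct : conj (fun x => f t x - ((p t : ℝ) : EReal)) u' = ⊤
        · rw [hct, EReal.sub_top]
          exact bot_le
        · set c' : ℝ := (conj (fun x => f t x - ((p t : ℝ) : EReal)) u').toReal with hc'_def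
          have hc'eq : conj (fun x => f t x - ((p t : ℝ) : EReal)) u' = (c' : EReal) :=
            (EReal.coe_toReal hct (farkas_conj_ne_bot (hgp t) u')).symm
          have h1 := hkey t u' c' (le_of_eq hc'eq)
          have h2 : u' x' ≤ c' := by
            rw [hx'_def]
            simp only [map_smul, smul_eq_mul]
            have hrne : r ≠ 0 := ne_of_lt hrneg
            have e1 : (-r)⁻¹ * (u' xh + c' * r) = (-r)⁻¹ * u' xh - c' := by
              field_simp
              ring
            have h3 := mul_le_mul_of_nonneg_left h1 (inv_pos.2 hrpos).le
            rw [mul_zero, e1] at h3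
            linarith
          rw [hc'eq, ← EReal.coe_sub]
          exact_mod_cast (by linarith : u' x' - c' ≤ (0 : ℝ))
      have h4 := h x' hx'feas
      have h5 : α < v x' := by
        rw [hx'_def]
        simp only [map_smul, smul_eq_mul]
        have hrne : r ≠ 0 := ne_of_lt hrneg
        have e1 : (-r)⁻¹ * (v xh + α * r) = (-r)⁻¹ * v xh - α := by
          field_simp
          ring
        have h6 : (-r)⁻¹ * u0 < (-r)⁻¹ * (v xh + α * r) :=
          mul_lt_mul_of_pos_left hvform (inv_pos.2 hrpos)
        rw [e1] at h6
        have h7 : 0 < (-r)⁻¹ * u0 := by positivity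
        linarith
      linarith
    · -- r = 0
      obtain ⟨x0, hx0⟩ := hne
      have hvxh : 0 < v xh := by
        rw [hrzero] at hvform
        nlinarith
      have hdom : ∀ (t : T) (u' : X →L[ℝ] ℝ),
          conj (fun x => f t x - ((p t : ℝ) : EReal)) u' ≠ ⊤ → u' xh ≤ 0 := by
        intro t u' hct
        set c' : ℝ := (conj (fun x => f t x - ((p t : ℝ) : EReal)) u').toReal with hc'_def
        have hc'eq : conj (fun x => f t x - ((p t : ℝ) : EReal)) u' = (c' : EReal) :=
          (EReal.coe_toReal hct (farkas_conj_ne_bot (hgp t) u')).symm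
        have h1 := hkey t u' c' (le_of_eq hc'eq)
        rw [hrzero] at h1
        nlinarith
      set lam : ℝ := (α - v x0) / v xh + 1 with hlam_def
      have hvx0 : v x0 ≤ α := h x0 hx0
      have hlampos : 0 < lam := by
        have hdiv : 0 ≤ (α - v x0) / v xh := div_nonneg (by linarith) hvxh.le
        rw [hlam_def]
        linarith
      have hfeas2 : x0 + lam • xh ∈ feas f p := by
        rw [hfeas]
        intro t
        apply farkas_biconj (hgp t) (hglsc t) (hgconv t)
        intro u'
        by_cases hct : conj (fun x => f t x - ((p t : ℝ) : EReal)) u' = ⊤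
        · rw [hct, EReal.sub_top]
          exact bot_le
        · set c' : ℝ := (conj (fun x => f t x - ((p t : ℝ) : EReal)) u').toReal with hc'_def
          have hc'eq : conj (fun x => f t x - ((p t : ℝ) : EReal)) u' = (c' : EReal) :=
            (EReal.coe_toReal hct (farkas_conj_ne_bot (hgp t) u')).symm
          -- g t x0 is a real number ≤ 0
          have hgx0 : f t x0 - ((p t : ℝ) : EReal) ≤ ((0 : ℝ) : EReal) := (hfeas x0).1 hx0 t
          have hgx0_ne_bot : f t x0 - ((p t : ℝ) : EReal) ≠ ⊥ :=
            farkas_sub_ne_bot ((hproper t).1 x0) _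
          have hgx0_ne_top : f t x0 - ((p t : ℝ) : EReal) ≠ ⊤ := by
            intro htop
            rw [htop] at hgx0
            exact absurd hgx0 (by simp)
          set t0' : ℝ := (f t x0 - ((p t : ℝ) : EReal)).toReal with ht0'_def
          have ht0'eq : f t x0 - ((p t : ℝ) : EReal) = (t0' : EReal) :=
            (EReal.coe_toReal hgx0_ne_top hgx0_ne_bot).symm
          have ht0'le : t0' ≤ 0 := by
            rw [ht0'eq] at hgx0
            exact_mod_cast hgx0
          -- Fenchel-Young at x0
          have hfy := farkas_fy (fun x => f t x - ((p t : ℝ) : EReal)) u' x0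
          rw [ht0'eq, hc'eq, ← EReal.coe_sub] at hfy
          have hfy' : u' x0 - t0' ≤ c' := by exact_mod_cast hfy
          have hu'xh : u' xh ≤ 0 := hdom t u' hct
          have hval : u' (x0 + lam • xh) = u' x0 + lam * u' xh := by
            rw [map_add, map_smul, smul_eq_mul]
          have hle : u' (x0 + lam • xh) ≤ c' := by
            rw [hval]
            nlinarith
          rw [hc'eq, ← EReal.coe_sub]
          exact_mod_cast (by linarith : u' (x0 + lam • xh) - c' ≤ (0 : ℝ))
      have h4 := h _ hfeas2
      rw [map_add, map_smul, smul_eq_mul] at h4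
      have h5 : (α - v x0) / v xh < lam := by
        rw [hlam_def]
        linarith
      rw [div_lt_iff₀ hvxh] at h5
      nlinarith
  · -- (ii) → (i)
    intro hmem x hx
    have hgx : ∀ t, f t x - ((p t : ℝ) : EReal) ≤ ((0 : ℝ) : EReal) := (hfeas x).1 hx
    have hcont : Continuous fun q : WeakDual ℝ X × ℝ => q.1 x - q.2 :=
      ((WeakDual.eval_continuous x).comp continuous_fst).sub continuous_snd
    have hclosed : IsClosed {q : WeakDual ℝ X × ℝ | q.1 x - q.2 ≤ 0} :=
      isClosed_le hcont continuous_const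
    have hhalf : Convex ℝ {w : (X →L[ℝ] ℝ) × ℝ | w.1 x - w.2 ≤ 0} := by
      apply convex_halfSpace_le
      constructor
      · intro a b
        simp only [Prod.fst_add, Prod.snd_add, ContinuousLinearMap.add_apply]
        ring
      · intro c a
        simp only [Prod.smul_fst, Prod.smul_snd, ContinuousLinearMap.smul_apply, smul_eq_mul]
        ring
    have hS_sub : S ⊆ {w : (X →L[ℝ] ℝ) × ℝ | w.1 x - w.2 ≤ 0} := by
      rintro ⟨u, γ⟩ hw
      obtain ⟨t, ht⟩ := Set.mem_iUnion.1 hw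
      have hfy := farkas_fy (fun x => f t x - ((p t : ℝ) : EReal)) u x
      have h1 : (u x : EReal) ≤ (γ : EReal) := by
        calc (u x : EReal) = (u x : EReal) - ((0 : ℝ) : EReal) := by
              rw [EReal.coe_zero, sub_zero]
          _ ≤ (u x : EReal) - (f t x - ((p t : ℝ) : EReal)) :=
              EReal.sub_le_sub le_rfl (hgx t)
          _ ≤ conj (fun x => f t x - ((p t : ℝ) : EReal)) u := hfy
          _ ≤ (γ : EReal) := ht
      have h2 : u x ≤ γ := by exact_mod_cast h1
      simp only [Set.mem_setOf_eq]
      linarith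
    have hcone_sub : coneHull S ⊆ {w : (X →L[ℝ] ℝ) × ℝ | w.1 x - w.2 ≤ 0} := by
      rintro w ⟨ρ, hρ, y, hy, rfl⟩
      have hy' : y ∈ {w : (X →L[ℝ] ℝ) × ℝ | w.1 x - w.2 ≤ 0} :=
        convexHull_min hS_sub hhalf hy
      simp only [Set.mem_setOf_eq, Prod.smul_fst, Prod.smul_snd,
        ContinuousLinearMap.smul_apply, smul_eq_mul] at hy' ⊢
      nlinarith
    have himg : (fun w : (X →L[ℝ] ℝ) × ℝ =>
        ((StrongDual.toWeakDual w.1 : WeakDual ℝ X), w.2)) '' (coneHull S) ⊆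
        {q : WeakDual ℝ X × ℝ | q.1 x - q.2 ≤ 0} := by
      rintro q ⟨w, hw, rfl⟩
      exact hcone_sub hw
    rw [wclosure2, Set.mem_setOf_eq] at hmem
    have hfinal := closure_minimal himg hclosed hmem
    have hfinal' : v x - α ≤ 0 := hfinal
    linarith
end
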